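/- arXiv:1605.00130 — 2 statements merged into one kernel-verified Lean document; each statement's English description precedes it below -/
import Mathlib

section
/- Let ϱ, c₀ > 0. There exists ϱ' = ϱ'(ϱ, c₀) > 0 such that: if D₁, D₂ ⊂ ℝ^d are ϱ-John domains with min{|D₁|, |D₂|} ≤ c₀ |D₁ ∩ D₂| (where |·| denotes Lebesgue measure), then D₁ ∪ D₂ is a ϱ'-John domain. -/
open Set Metric MeasureTheory
open scoped ENNReal NNReal

noncomputable section

/-- The Euclidean plane. -/
abbrev Pt := EuclideanSpace ℝ (Fin 2)

/-- A bounded domain `Ω ⊆ ℝ^d` is a `ϱ`-John domain if there is a John center `p ∈ Ω`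
such that every `x ∈ Ω \ {p}` can be joined to `p` by a rectifiable curve,
parametrized by arc length, whose `ϱ`-carrot is contained in `Ω`. -/
def IsJohnDomain {d : ℕ} (ϱ : ℝ) (Ω : Set (EuclideanSpace ℝ (Fin d))) : Prop :=
  IsOpen Ω ∧ IsConnected Ω ∧ Bornology.IsBounded Ω ∧
  ∃ p ∈ Ω, ∀ x ∈ Ω \ {p}, ∃ L : ℝ, 0 ≤ L ∧
    ∃ γ : ℝ → EuclideanSpace ℝ (Fin d),
      γ 0 = x ∧ γ L = p ∧ MapsTo γ (Icc 0 L) Ω ∧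
      (∀ t ∈ Icc (0:ℝ) L, eVariationOn γ (Icc 0 t) = ENNReal.ofReal t) ∧
      (∀ t ∈ Icc (0:ℝ) L, ball (γ t) (ϱ * t) ⊆ Ω)

/-- A (simple) polygon, encoded by its cyclically ordered list of vertices:
consecutive vertices span the edges, non-adjacent edges are disjoint, adjacent edges
meet exactly in the common vertex, and each vertex is a genuine corner. -/
structure PlanePolygon where
  n : ℕ
  three_le : 3 ≤ n
  vertex : ZMod n → Pt
  inj : Function.Injective vertex
  edges_meet : ∀ i j : ZMod n, j ≠ i → j ≠ i + 1 → j + 1 ≠ i →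
    segment ℝ (vertex i) (vertex (i + 1)) ∩ segment ℝ (vertex j) (vertex (j + 1)) = ∅
  adj_meet : ∀ i : ZMod n,
    segment ℝ (vertex i) (vertex (i + 1)) ∩ segment ℝ (vertex (i + 1)) (vertex (i + 2))
      = {vertex (i + 1)}
  corner : ∀ i : ZMod n, ¬ Collinear ℝ ({vertex i, vertex (i + 1), vertex (i + 2)} : Set Pt)

namespace PlanePolygon

/-- The boundary polygonal curve of a polygon. -/
def boundary (P : PlanePolygon) : Set Pt :=
  ⋃ i : ZMod P.n, segment ℝ (P.vertex i) (P.vertex (i + 1))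

/-- The (closed) region enclosed by the boundary curve: all points whose connected
component in the complement of the boundary is bounded (boundary points included,
since their component is empty). -/
def carrier (P : PlanePolygon) : Set Pt :=
  {x : Pt | Bornology.IsBounded (connectedComponentIn P.boundaryᶜ x)}

/-- The set of vertices `𝒱_P`. -/
def vertices (P : PlanePolygon) : Set Pt := Set.range P.vertex

open Classical in
/-- The interior angle at the `i`-th vertex; it is the unoriented angle of the two adjacent
edges whenever the corresponding angular bisector points into the polygon, and `2π` minus
this angle otherwise. -/
def interiorAngle (P : PlanePolygon) (i : ZMod P.n) : ℝ :=
  if (∃ ε > (0:ℝ), ∀ t ∈ Ioo (0:ℝ) ε,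
        P.vertex i + t • (midpoint ℝ (P.vertex (i - 1)) (P.vertex (i + 1)) - P.vertex i)
          ∈ interior P.carrier)
  then EuclideanGeometry.angle (P.vertex (i - 1)) (P.vertex i) (P.vertex (i + 1))
  else 2 * Real.pi - EuclideanGeometry.angle (P.vertex (i - 1)) (P.vertex i) (P.vertex (i + 1))

/-- The set `𝒱'_P` of concave vertices, i.e. those with interior angle `> π`. -/
def concaveVertices (P : PlanePolygon) : Set Pt :=
  {x : Pt | ∃ i : ZMod P.n, P.vertex i = x ∧ Real.pi < P.interiorAngle i}

open Classical in
/-- The interior angle `∢(x, P)` at a point `x` (junk value `0` if `x` is not a vertex). -/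
def angleAt (P : PlanePolygon) (x : Pt) : ℝ :=
  if h : ∃ i : ZMod P.n, P.vertex i = x then P.interiorAngle h.choose else 0

end PlanePolygon

/-- The intrinsic (geodesic) distance of `p, q` inside `S`: the infimal length of a
Lipschitz curve in `S` joining `p` and `q`. -/
def intrinsicDist (S : Set Pt) (p q : Pt) : ℝ :=
  sInf {L : ℝ | ∃ γ : ℝ → Pt, γ 0 = p ∧ γ 1 = q ∧ MapsTo γ (Icc (0:ℝ) 1) S ∧
    (∃ K : ℝ≥0, LipschitzOnWith K γ (Icc (0:ℝ) 1)) ∧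
    eVariationOn γ (Icc (0:ℝ) 1) = ENNReal.ofReal L}

/-- The intrinsic diameter `d(S)`. -/
def intrinsicDiam (S : Set Pt) : ℝ :=
  sSup {r : ℝ | ∃ p ∈ S, ∃ q ∈ S, intrinsicDist S p q = r}

/-- The segment `[p;q]` induces the partition `P = Q₁ ∪ Q₂` with `Q₁ ∩ Q₂ = [p;q]`. -/
def InducesPartition (P : PlanePolygon) (p q : Pt) (Q₁ Q₂ : PlanePolygon) : Prop :=
  p ≠ q ∧ p ∈ frontier P.carrier ∧ q ∈ frontier P.carrier ∧
  segment ℝ p q ⊆ P.carrier ∧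
  Q₁.carrier ∪ Q₂.carrier = P.carrier ∧
  Q₁.carrier ∩ Q₂.carrier = segment ℝ p q

/-- `ϑ`-semiconvexity of a polygon. -/
def Semiconvex (ϑ : ℝ) (P : PlanePolygon) : Prop :=
  ∀ v ∈ P.concaveVertices, ∀ w ∈ frontier P.carrier, ∀ Q₁ Q₂ : PlanePolygon,
    InducesPartition P v w Q₁ Q₂ →
    ϑ * min (intrinsicDiam Q₁.carrier) (intrinsicDiam Q₂.carrier) ≤ dist v w

/-- `ω`-rotundity of a polygon: it contains a ball of radius `≥ ω d(P)`. -/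
def Rotund (ω : ℝ) (P : PlanePolygon) : Prop :=
  ∃ x ∈ P.carrier, ∃ r : ℝ, ω * intrinsicDiam P.carrier ≤ r ∧ ball x r ⊆ P.carrier

/-- The `η`-cigar around the segment `[v;w]`. -/
def cigar (v w : Pt) (η : ℝ) : Set Pt :=
  ⋃ s ∈ Icc (0:ℝ) 1, ball (v + s • (w - v)) (η * dist v w * min s (1 - s))

/-- The visible region `cig_P([v;w], η)`. -/
def visCigar (P : PlanePolygon) (v w : Pt) (η : ℝ) : Set Pt :=
  {x ∈ closure (cigar v w η) | ∃ p ∈ segment ℝ v w, segment ℝ p x ⊆ P.carrier}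

/-- The segmentation property (SP) for the segment `[v;w]` inducing `P = Q₁ ∪ Q₂`. -/
def SatisfiesSP (P : PlanePolygon) (η : ℝ) (v w : Pt) (Q₁ Q₂ : PlanePolygon) : Prop :=
  P.concaveVertices ∩ visCigar P v w η ⊆ {v, w} ∧
  (Q₁.n = 3 → (1/2) * Real.arcsin η < Q₁.angleAt v) ∧
  (Q₂.n = 3 → (1/2) * Real.arcsin η < Q₂.angleAt v)

/-- `(SP)`-`ϑ`-semiconvexity (with respect to the parameter `η`). -/
def SPSemiconvex (ϑ η : ℝ) (P : PlanePolygon) : Prop :=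
  ∀ v ∈ P.concaveVertices, ∀ w ∈ frontier P.carrier, ∀ Q₁ Q₂ : PlanePolygon,
    InducesPartition P v w Q₁ Q₂ → SatisfiesSP P η v w Q₁ Q₂ →
    ϑ * min (intrinsicDiam Q₁.carrier) (intrinsicDiam Q₂.carrier) ≤ dist v w

/-- `N'(Q)`: the number of concave vertices of `P` other than `v, w` lying on `∂Q`. -/
def Nprime (P Q : PlanePolygon) (v w : Pt) : ℕ :=
  ((P.concaveVertices \ {v, w}) ∩ frontier Q.carrier).ncard

open Classical in
/-- The auxiliary set `Q_{v,w}` attached to a partition `P = Q₁ ∪ Q₂`. -/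
def Qvw (P : PlanePolygon) (v w : Pt) (Q₁ Q₂ : PlanePolygon) : Set Pt :=
  if Nprime P Q₁ v w < Nprime P Q₂ v w ∨
      (Nprime P Q₁ v w = Nprime P Q₂ v w ∧ volume Q₁.carrier < volume Q₂.carrier) then
    Q₁.carrier
  else if Nprime P Q₁ v w = Nprime P Q₂ v w ∧ volume Q₁.carrier = volume Q₂.carrier then
    Q₁.carrier ∪ Q₂.carrier
  else Q₂.carrier

/-- The weak segmentation property (WSP). -/
def SatisfiesWSP (P : PlanePolygon) (η : ℝ) (v w : Pt) (Q₁ Q₂ : PlanePolygon) : Prop :=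
  P.concaveVertices ∩ visCigar P v w η ∩ Qvw P v w Q₁ Q₂ ⊆ {v, w} ∧
  (Q₁.n = 3 → (1/2) * Real.arcsin η < Q₁.angleAt v) ∧
  (Q₂.n = 3 → (1/2) * Real.arcsin η < Q₂.angleAt v)

/-- The width `|A|_{Π,R}` of `A` in the direction `R e₁ = (cos θ, sin θ)`, `R ∈ SO(2)`
being parametrized by the rotation angle `θ`. -/
def dirWidth (A : Set Pt) (θ : ℝ) : ℝ :=
  sSup {r : ℝ | ∃ x ∈ A, ∃ y ∈ A,
    |(x 0 - y 0) * Real.cos θ + (x 1 - y 1) * Real.sin θ| = r}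

/-- `min_{R ∈ SO(2)} |A|_{Π,R}`. -/
def minWidth (A : Set Pt) : ℝ := ⨅ θ : ℝ, dirWidth A θ

/-- `max_{R ∈ SO(2)} |A|_{Π,R}`. -/
def maxWidth (A : Set Pt) : ℝ := ⨆ θ : ℝ, dirWidth A θ

/-- Coordinates of `y` in the frame centered at `x` rotated by the angle `θ`. -/
def localCoords (x y : Pt) (θ : ℝ) : ℝ × ℝ :=
  ((y 0 - x 0) * Real.cos θ + (y 1 - x 1) * Real.sin θ,
    -((y 0 - x 0) * Real.sin θ) + (y 1 - x 1) * Real.cos θ)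

/-- `Ω ⊆ ℝ²` has Lipschitz boundary: near every boundary point, after a rotation, `Ω`
is the region above the graph of a Lipschitz function. -/
def HasLipschitzBoundary (Ω : Set Pt) : Prop :=
  ∀ x ∈ frontier Ω, ∃ r > (0:ℝ), ∃ θ : ℝ, ∃ f : ℝ → ℝ,
    (∃ K : ℝ≥0, LipschitzWith K f) ∧
    Ω ∩ ball x r = {y ∈ ball x r | f (localCoords x y θ).1 < (localCoords x y θ).2}

/-- `Ω ⊆ ℝ²` has `C¹` boundary: near every boundary point, after a rotation, `Ω`
is the region above the graph of a `C¹` function. -/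
def HasC1Boundary (Ω : Set Pt) : Prop :=
  ∀ x ∈ frontier Ω, ∃ r > (0:ℝ), ∃ θ : ℝ, ∃ f : ℝ → ℝ,
    ContDiff ℝ 1 f ∧
    Ω ∩ ball x r = {y ∈ ball x r | f (localCoords x y θ).1 < (localCoords x y θ).2}

/-- The saturation `sat(D)`: the interior of the complement of the unbounded connected
component of `ℝ² \ D`. -/
def saturate (D : Set Pt) : Set Pt :=
  interior {x : Pt | x ∈ D ∨ Bornology.IsBounded (connectedComponentIn Dᶜ x)}

/-- The carrier of an optional polygon (`∅` for `none`). -/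
def optPolyCarrier : Option PlanePolygon → Set Pt
  | none => ∅
  | some Q => Q.carrier

/-- The concave vertices of an optional polygon (`∅` for `none`). -/
def optPolyConcave : Option PlanePolygon → Set Pt
  | none => ∅
  | some Q => Q.concaveVertices

end
namespace JohnUnionAux
open Bornology

section Aux
variable {d : ℕ}
local notation "E" => EuclideanSpace ℝ (Fin d)

lemma john_mono {ϱ ϱ' : ℝ} {Ω : Set E} (h : IsJohnDomain ϱ Ω) (h1 : ϱ' ≤ ϱ) :
    IsJohnDomain ϱ' Ω := by
  obtain ⟨ho, hc, hb, p, hp, hcur⟩ := h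
  refine ⟨ho, hc, hb, p, hp, fun x hx => ?_⟩
  obtain ⟨L, hL, γ, h0, hLp, hm, hv, hball⟩ := hcur x hx
  exact ⟨L, hL, γ, h0, hLp, hm, hv, fun t ht =>
    (ball_subset_ball (mul_le_mul_of_nonneg_right h1 ht.1)).trans (hball t ht)⟩

lemma var_sub {γ : ℝ → E} {L : ℝ}
    (hv : ∀ t ∈ Icc (0:ℝ) L, eVariationOn γ (Icc 0 t) = ENNReal.ofReal t)
    {s t : ℝ} (hs : 0 ≤ s) (hst : s ≤ t) (ht : t ≤ L) :
    eVariationOn γ (Icc s t) = ENNReal.ofReal (t - s) := by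
  have h1 := hv s ⟨hs, le_trans hst ht⟩
  have h2 := hv t ⟨le_trans hs hst, ht⟩
  have h3 := eVariationOn.Icc_add_Icc γ (s := Icc (0:ℝ) t) hs hst ⟨hs, hst⟩
  have e1 : Icc (0:ℝ) t ∩ Icc 0 s = Icc 0 s :=
    Set.inter_eq_right.2 (Icc_subset_Icc le_rfl hst)
  have e2 : Icc (0:ℝ) t ∩ Icc s t = Icc s t :=
    Set.inter_eq_right.2 (Icc_subset_Icc hs le_rfl)
  rw [e1, e2, inter_self, h1, h2] at h3
  have : ENNReal.ofReal t = ENNReal.ofReal s + ENNReal.ofReal (t - s) := by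
    rw [← ENNReal.ofReal_add hs (by linarith)]; ring_nf
  rw [this] at h3
  exact (ENNReal.add_right_inj ENNReal.ofReal_ne_top).1 h3

lemma var_dist {γ : ℝ → E} {L : ℝ}
    (hv : ∀ t ∈ Icc (0:ℝ) L, eVariationOn γ (Icc 0 t) = ENNReal.ofReal t)
    {s t : ℝ} (hs : 0 ≤ s) (hst : s ≤ t) (ht : t ≤ L) :
    dist (γ s) (γ t) ≤ t - s := by
  have h := eVariationOn.edist_le γ (s := Icc s t)
    (show s ∈ Icc s t from ⟨le_rfl, hst⟩) (show t ∈ Icc s t from ⟨hst, le_rfl⟩)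
  rw [var_sub hv hs hst ht] at h
  rwa [edist_le_ofReal (by linarith)] at h

lemma var_cont {γ : ℝ → E} {L : ℝ}
    (hv : ∀ t ∈ Icc (0:ℝ) L, eVariationOn γ (Icc 0 t) = ENNReal.ofReal t) :
    ContinuousOn γ (Icc 0 L) := by
  refine (LipschitzOnWith.of_dist_le_mul (K := 1) fun x hx y hy => ?_).continuousOn
  rcases le_total x y with h | h
  · calc dist (γ x) (γ y) ≤ y - x := var_dist hv hx.1 h hy.2
      _ ≤ 1 * dist x y := by rw [Real.dist_eq, one_mul]; exact le_abs_self _ |>.trans (by rw [abs_sub_comm])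
  · calc dist (γ x) (γ y) = dist (γ y) (γ x) := dist_comm _ _
      _ ≤ x - y := var_dist hv hy.1 h hx.2
      _ ≤ 1 * dist x y := by rw [Real.dist_eq, one_mul]; exact le_abs_self _

end Aux

section Aux2
variable {d : ℕ}
local notation "E" => EuclideanSpace ℝ (Fin d)

lemma var_reverse {γ : ℝ → E} {ℓ : ℝ} (hℓ : 0 ≤ ℓ)
    (hv : ∀ t ∈ Icc (0:ℝ) ℓ, eVariationOn γ (Icc 0 t) = ENNReal.ofReal t) :
    ∀ t ∈ Icc (0:ℝ) ℓ, eVariationOn (fun u => γ (ℓ - u)) (Icc 0 t) = ENNReal.ofReal t := by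
  intro t ht
  have : (fun u => γ (ℓ - u)) = γ ∘ (fun u => ℓ - u) := rfl
  rw [this, eVariationOn.comp_eq_of_antitoneOn γ _
    (fun x _ y _ hxy => show ℓ - y ≤ ℓ - x by linarith), image_const_sub_Icc]
  have := var_sub hv (s := ℓ - t) (t := ℓ - 0) (by linarith [ht.2]) (by linarith [ht.1]) (by linarith)
  rw [this]; ring_nf

/-- Concatenation of two unit-speed curves. -/
lemma concat {γ σ : ℝ → E} {L M : ℝ} (hL : 0 ≤ L) (hM : 0 ≤ M) (hy : γ L = σ 0)
    (hγ : ∀ t ∈ Icc (0:ℝ) L, eVariationOn γ (Icc 0 t) = ENNReal.ofReal t)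
    (hσ : ∀ t ∈ Icc (0:ℝ) M, eVariationOn σ (Icc 0 t) = ENNReal.ofReal t) :
    ∃ Γ : ℝ → E, (∀ t ∈ Icc (0:ℝ) L, Γ t = γ t) ∧ (∀ u ∈ Icc (0:ℝ) M, Γ (L + u) = σ u) ∧
      (∀ t ∈ Icc (0:ℝ) (L + M), eVariationOn Γ (Icc 0 t) = ENNReal.ofReal t) := by
  refine ⟨fun t => if t ≤ L then γ t else σ (t - L), fun t ht => if_pos ht.2, ?_, ?_⟩
  · intro u hu
    rcases eq_or_lt_of_le hu.1 with h | h
    · simp only [← h, add_zero, if_pos le_rfl, hy]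
    · show (if L + u ≤ L then γ (L + u) else σ (L + u - L)) = σ u
      rw [if_neg (by linarith), add_sub_cancel_left]
  · intro t ht
    by_cases h : t ≤ L
    · rw [eVariationOn.eq_of_eqOn (fun s hs => if_pos (le_trans hs.2 h))]
      exact hγ t ⟨ht.1, h⟩
    · push_neg at h
      have h3 := eVariationOn.Icc_add_Icc (f := fun t => if t ≤ L then γ t else σ (t - L))
        (s := Icc (0:ℝ) t) hL h.le ⟨hL, h.le⟩
      have e1 : Icc (0:ℝ) t ∩ Icc 0 L = Icc 0 L :=
        Set.inter_eq_right.2 (Icc_subset_Icc le_rfl h.le)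
      have e2 : Icc (0:ℝ) t ∩ Icc L t = Icc L t :=
        Set.inter_eq_right.2 (Icc_subset_Icc hL le_rfl)
      rw [e1, e2, inter_self] at h3
      have v1 : eVariationOn (fun t => if t ≤ L then γ t else σ (t - L)) (Icc 0 L)
          = ENNReal.ofReal L := by
        rw [eVariationOn.eq_of_eqOn (fun s hs => if_pos hs.2)]
        exact hγ L ⟨hL, le_rfl⟩
      have v2 : eVariationOn (fun t => if t ≤ L then γ t else σ (t - L)) (Icc L t)
          = ENNReal.ofReal (t - L) := by
        have he : EqOn (fun t => if t ≤ L then γ t else σ (t - L)) (σ ∘ fun s => s - L)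
            (Icc L t) := by
          intro s hs
          rcases eq_or_lt_of_le hs.1 with h' | h'
          · simp only [← h', if_pos le_rfl, Function.comp_apply, sub_self, hy]
          · simp only [if_neg (not_le.2 h'), Function.comp_apply]
        rw [eVariationOn.eq_of_eqOn he,
          eVariationOn.comp_eq_of_monotoneOn σ _ (fun x _ y _ hxy => show x - L ≤ y - L by linarith),
          image_sub_const_Icc, sub_self]
        exact hσ (t - L) ⟨by linarith, by linarith [ht.2]⟩
      rw [v1, v2] at h3
      rw [← h3, ← ENNReal.ofReal_add hL (by linarith)]
      ring_nf

end Aux2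

section Aux3
variable {d : ℕ}
local notation "E" => EuclideanSpace ℝ (Fin d)

/-- John curves, including from the center itself. -/
lemma john_curve {ϱ : ℝ} {Ω : Set E} {p : E} (hp : p ∈ Ω)
    (hj : ∀ x ∈ Ω \ {p}, ∃ L : ℝ, 0 ≤ L ∧ ∃ γ : ℝ → E,
      γ 0 = x ∧ γ L = p ∧ MapsTo γ (Icc 0 L) Ω ∧
      (∀ t ∈ Icc (0:ℝ) L, eVariationOn γ (Icc 0 t) = ENNReal.ofReal t) ∧
      (∀ t ∈ Icc (0:ℝ) L, ball (γ t) (ϱ * t) ⊆ Ω))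
    {x : E} (hx : x ∈ Ω) :
    ∃ L : ℝ, 0 ≤ L ∧ ∃ γ : ℝ → E,
      γ 0 = x ∧ γ L = p ∧ MapsTo γ (Icc 0 L) Ω ∧
      (∀ t ∈ Icc (0:ℝ) L, eVariationOn γ (Icc 0 t) = ENNReal.ofReal t) ∧
      (∀ t ∈ Icc (0:ℝ) L, ball (γ t) (ϱ * t) ⊆ Ω) := by
  by_cases hxp : x = p
  · subst hxp
    refine ⟨0, le_rfl, fun _ => x, rfl, rfl, fun t _ => hx, fun t ht => ?_, fun t ht => ?_⟩
    · have : t = 0 := le_antisymm ht.2 ht.1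
      subst this
      rw [Icc_self, eVariationOn.subsingleton _ (by simp [Set.subsingleton_singleton])]
      simp
    · have : t = 0 := le_antisymm ht.2 ht.1
      subst this
      simp
  · exact hj x ⟨hx, hxp⟩

lemma radius_le_infDist {Ω : Set E} (hne : Ωᶜ.Nonempty) {y : E} {r : ℝ}
    (h : ball y r ⊆ Ω) : r ≤ infDist y Ωᶜ := by
  by_contra hc
  push_neg at hc
  obtain ⟨w, hw, hw2⟩ := (infDist_lt_iff hne).1 hc
  exact hw (h (mem_ball'.2 hw2))

lemma radius_le_diam (hd : d ≠ 0) {Ω : Set E} (hb : IsBounded Ω) {y : E} {r : ℝ}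
    (hr : 0 ≤ r) (h : ball y r ⊆ Ω) : r ≤ diam Ω := by
  haveI : Nonempty (Fin d) := ⟨⟨0, Nat.pos_of_ne_zero hd⟩⟩
  by_contra hc
  push_neg at hc
  have hdn : (0:ℝ) ≤ diam Ω := diam_nonneg
  have hdpos : 0 < r := lt_of_le_of_lt diam_nonneg hc
  set ε := (r - diam Ω) / 2 with hε
  have hεpos : 0 < ε := by simp only [hε]; linarith
  obtain ⟨u, hu⟩ := exists_norm_eq E (show (0:ℝ) ≤ r - ε by simp only [hε]; linarith)
  have h1 : y ∈ ball y r := mem_ball_self hdpos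
  have h2 : y + u ∈ ball y r := by
    rw [mem_ball, dist_self_add_left, hu]
    simp only [hε]; linarith
  have := dist_le_diam_of_mem hb (h h2) (h h1)
  rw [dist_self_add_left, hu] at this
  simp only [hε] at this
  linarith

end Aux3

section Step
variable {d : ℕ}
local notation "E" => EuclideanSpace ℝ (Fin d)

lemma layer_step (hd : d ≠ 0) {ϱ : ℝ} (hϱ0 : 0 < ϱ) (hϱ1 : ϱ ≤ 1) {Ω : Set E}
    (hne : Ωᶜ.Nonempty) {p : E}
    (hj : ∀ x ∈ Ω \ {p}, ∃ L : ℝ, 0 ≤ L ∧ ∃ γ : ℝ → E,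
      γ 0 = x ∧ γ L = p ∧ MapsTo γ (Icc 0 L) Ω ∧
      (∀ t ∈ Icc (0:ℝ) L, eVariationOn γ (Icc 0 t) = ENNReal.ofReal t) ∧
      (∀ t ∈ Icc (0:ℝ) L, ball (γ t) (ϱ * t) ⊆ Ω))
    {δ : ℝ} (hδ : 0 < δ) (hδp : 2 * δ < infDist p Ωᶜ) :
    volume {x ∈ Ω | infDist x Ωᶜ ≤ δ} ≤ ENNReal.ofReal ((8/ϱ)^d) *
      volume ({x ∈ Ω | infDist x Ωᶜ ≤ 3*δ} \ {x ∈ Ω | infDist x Ωᶜ ≤ δ}) := by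
  haveI : Nonempty (Fin d) := ⟨⟨0, Nat.pos_of_ne_zero hd⟩⟩
  set Aδ := {x ∈ Ω | infDist x Ωᶜ ≤ δ} with hAδ
  set B := {x ∈ Ω | infDist x Ωᶜ ≤ 3*δ} \ Aδ with hB
  -- for every a ∈ Aδ find a point y at distance ≤ 2δ/ϱ with infDist exactly 2δ
  have H : ∀ a ∈ Aδ, ∃ y : E, dist a y ≤ 2*δ/ϱ ∧ infDist y Ωᶜ = 2*δ := by
    intro a ha
    obtain ⟨haΩ, had⟩ := ha
    have hap : a ≠ p := by
      intro h; rw [h] at had; linarith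
    obtain ⟨L, hL, γ, h0, hLp, hm, hv, hball⟩ := hj a ⟨haΩ, hap⟩
    have hcont : ContinuousOn (fun t => infDist (γ t) Ωᶜ) (Icc 0 L) :=
      (continuous_infDist_pt _).comp_continuousOn (var_cont hv)
    have hmem : 2*δ ∈ Icc (infDist (γ 0) Ωᶜ) (infDist (γ L) Ωᶜ) := by
      rw [h0, hLp]; exact ⟨by linarith, hδp.le⟩
    obtain ⟨t₀, ht₀, hft₀⟩ := intermediate_value_Icc hL hcont hmem
    refine ⟨γ t₀, ?_, hft₀⟩
    have h1 : ϱ * t₀ ≤ 2*δ := by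
      rw [← hft₀]
      exact radius_le_infDist hne (hball t₀ ht₀)
    have h2 : dist a (γ t₀) ≤ t₀ := by
      rw [← h0]
      have := var_dist hv (le_refl 0) ht₀.1 ht₀.2
      simpa using this
    calc dist a (γ t₀) ≤ t₀ := h2
      _ ≤ 2*δ/ϱ := by rw [le_div_iff₀ hϱ0]; linarith
  choose! y hy1 hy2 using H
  -- Vitali covering
  obtain ⟨u, hu_sub, hu_disj, hu_cov⟩ :=
    Vitali.exists_disjoint_subfamily_covering_enlargement_closedBall Aδ y
      (fun _ => 2*δ/ϱ) (2*δ/ϱ) (fun a _ => le_rfl) 4 (by norm_num)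
  have hrpos : 0 < 2*δ/ϱ := by positivity
  have hu_cnt : u.Countable := by
    refine hu_disj.countable_of_nonempty_interior fun a _ => ?_
    exact ⟨y a, ball_subset_interior_closedBall (mem_ball_self hrpos)⟩
  -- the small balls are inside B and disjoint
  have hsmall : ∀ a ∈ Aδ, ball (y a) δ ⊆ B := by
    intro a ha w hw
    rw [mem_ball, dist_comm] at hw
    have hy2a := hy2 a ha
    have hd1 : infDist w Ωᶜ ≤ 3*δ := by
      have := infDist_le_infDist_add_dist (x := w) (y := y a) (s := Ωᶜ)
      rw [dist_comm] at this
      linarith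
    have hd2 : δ < infDist w Ωᶜ := by
      have := infDist_le_infDist_add_dist (x := y a) (y := w) (s := Ωᶜ)
      linarith
    have hwΩ : w ∈ Ω := by
      apply ball_infDist_compl_subset
      rw [mem_ball, dist_comm, hy2a]
      linarith
    exact ⟨⟨hwΩ, hd1⟩, fun hcon => by have := hcon.2; linarith⟩
  -- covering estimate
  have hcov : Aδ ⊆ ⋃ b ∈ u, closedBall (y b) (4 * (2*δ/ϱ)) := by
    intro a ha
    obtain ⟨b, hb, hsub⟩ := hu_cov a ha
    exact mem_biUnion hb (hsub (mem_closedBall.2 (hy1 a ha)))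
  have hfr : (Module.finrank ℝ (EuclideanSpace ℝ (Fin d))) = d := finrank_euclideanSpace_fin
  have hmeas : ∀ b : E, volume (closedBall (y b) (4*(2*δ/ϱ)))
      = ENNReal.ofReal ((8/ϱ)^d) * volume (ball (y b) δ) := by
    intro b
    have he : 4*(2*δ/ϱ) = (8/ϱ) * δ := by ring
    rw [he, Measure.addHaar_closedBall_mul volume (y b) (by positivity) hδ.le,
      ← Measure.addHaar_closedBall_center volume (y b) (r := δ),
      Measure.addHaar_closedBall_eq_addHaar_ball, hfr]
  calc volume Aδ ≤ volume (⋃ b ∈ u, closedBall (y b) (4 * (2*δ/ϱ))) := measure_mono hcov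
    _ ≤ ∑' b : u, volume (closedBall (y (b:E)) (4 * (2*δ/ϱ))) := measure_biUnion_le _ hu_cnt _
    _ = ∑' b : u, ENNReal.ofReal ((8/ϱ)^d) * volume (ball (y (b:E)) δ) := by
        simp_rw [hmeas]
    _ = ENNReal.ofReal ((8/ϱ)^d) * ∑' b : u, volume (ball (y (b:E)) δ) := ENNReal.tsum_mul_left
    _ = ENNReal.ofReal ((8/ϱ)^d) * volume (⋃ b ∈ u, ball (y b) δ) := by
        rw [measure_biUnion hu_cnt ?_ (fun b _ => measurableSet_ball)]
        intro b hb c hc hbc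
        refine (hu_disj hb hc hbc).mono ?_ ?_
        · exact (ball_subset_closedBall).trans (closedBall_subset_closedBall (by
            rw [le_div_iff₀ hϱ0]; nlinarith))
        · exact (ball_subset_closedBall).trans (closedBall_subset_closedBall (by
            rw [le_div_iff₀ hϱ0]; nlinarith))
    _ ≤ ENNReal.ofReal ((8/ϱ)^d) * volume B := by
        gcongr
        exact iUnion₂_subset fun b hb => hsmall b (hu_sub hb)

end Step

section Deep
variable {d : ℕ}
local notation "E" => EuclideanSpace ℝ (Fin d)

lemma exists_deep (hd : d ≠ 0) {ϱ c₀ : ℝ} (hϱ0 : 0 < ϱ) (hϱ1 : ϱ ≤ 1) (hc0 : 0 < c₀) :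
    ∃ c₁ : ℝ, 0 < c₁ ∧ c₁ ≤ 1 ∧ ∀ (Ω S : Set E), IsJohnDomain ϱ Ω → S ⊆ Ω →
      volume Ω ≤ ENNReal.ofReal c₀ * volume S →
      ∃ z ∈ S, ball z (c₁ * diam Ω) ⊆ Ω := by
  haveI : Nonempty (Fin d) := ⟨⟨0, Nat.pos_of_ne_zero hd⟩⟩
  set c : ℝ := (8/ϱ)^d with hc
  have hcpos : 0 < c := by positivity
  obtain ⟨k₀, hk₀⟩ := exists_pow_lt_of_lt_one (show (0:ℝ) < 1/c₀ by positivity)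
    (show c/(1+c) < 1 by rw [div_lt_one (by linarith)]; linarith)
  set k := k₀ + 1 with hk
  have hkk : (c/(1+c))^k < 1/c₀ :=
    lt_of_le_of_lt (pow_le_pow_of_le_one (by positivity) (by rw [div_le_one (by linarith)]; linarith) (by omega)) hk₀
  set c₁ : ℝ := ϱ / (4 * 3^k) with hc₁
  have hc₁pos : 0 < c₁ := by positivity
  refine ⟨c₁, hc₁pos, ?_, ?_⟩
  · rw [hc₁, div_le_one (by positivity)]
    have : (1:ℝ) ≤ 3^k := one_le_pow₀ (by norm_num)
    nlinarith
  intro Ω S hJ hSΩ hvol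
  obtain ⟨ho, hconn, hb, p, hp, hj⟩ := hJ
  -- the complement is nonempty
  obtain ⟨R, hR⟩ := hb.subset_closedBall 0
  obtain ⟨xout, hxout⟩ := NormedSpace.exists_lt_norm ℝ E R
  have hne : Ωᶜ.Nonempty := ⟨xout, fun hmem => by
    have := hR hmem; rw [mem_closedBall, dist_zero_right] at this; linarith⟩
  -- `p` is deep
  have hdeep : ∀ x ∈ Ω, ϱ * dist x p ≤ infDist p Ωᶜ := by
    intro x hx
    by_cases hxp : x = p
    · simp [hxp, infDist_nonneg]
    obtain ⟨L, hL, γ, h0, hLp, hm, hv, hball⟩ := hj x ⟨hx, hxp⟩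
    have h1 : dist x p ≤ L := by
      rw [← h0, ← hLp]
      simpa using var_dist hv le_rfl hL le_rfl
    have h2 : ϱ * L ≤ infDist p Ωᶜ := by
      rw [← hLp]
      exact radius_le_infDist hne (hball L ⟨hL, le_rfl⟩)
    nlinarith
  have hinfnn : (0:ℝ) ≤ infDist p Ωᶜ := infDist_nonneg
  have hdiam : ϱ * diam Ω ≤ 2 * infDist p Ωᶜ := by
    have h2 : diam Ω ≤ 2 * infDist p Ωᶜ / ϱ := by
      refine diam_le_of_forall_dist_le (by positivity) fun x hx y hy => ?_
      have h3 := hdeep x hx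
      have h4 := hdeep y hy
      have h5 := dist_triangle x p y
      rw [dist_comm p y] at h5
      rw [le_div_iff₀ hϱ0]
      nlinarith
    rw [le_div_iff₀ hϱ0] at h2
    nlinarith
  -- Ω is nonempty open with positive diameter
  obtain ⟨w₀, hw₀⟩ := hconn.nonempty
  obtain ⟨ε, hεpos, hεball⟩ := Metric.isOpen_iff.1 ho w₀ hw₀
  have hΔpos : 0 < diam Ω := lt_of_lt_of_le hεpos (radius_le_diam hd hb hεpos.le hεball)
  set Δ := diam Ω with hΔ
  set δ₀ : ℝ := c₁ * Δ with hδ₀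
  have hδ₀pos : 0 < δ₀ := by positivity
  set A : ℝ → Set E := fun r => {x ∈ Ω | infDist x Ωᶜ ≤ r} with hA
  -- single step
  have hstep : ∀ j : ℕ, j < k → ENNReal.ofReal c * volume (A (3^(j+1) * δ₀)) ≥
      (1 + ENNReal.ofReal c) * volume (A (3^j * δ₀)) := by
    intro j hjk
    have hδj : (0:ℝ) < 3^j * δ₀ := by positivity
    have hδjp : 2 * (3^j * δ₀) < infDist p Ωᶜ := by
      have hδ₀eq : δ₀ = ϱ * Δ / (4 * 3^k) := by rw [hδ₀, hc₁]; ring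
      have h30 : (0:ℝ) < 3^k₀ := by positivity
      have hpk : (3:ℝ)^k = 3*3^k₀ := by rw [hk, pow_succ]; ring
      have h1 : (3:ℝ)^j ≤ 3^k₀ := pow_le_pow_right₀ (by norm_num) (by omega)
      have hPd : 0 < ϱ * Δ := by positivity
      have h6 : 2*((3:ℝ)^j*δ₀) ≤ ϱ*Δ/6 := by
        rw [hδ₀eq, hpk]
        have expand : 2*((3:ℝ)^j*(ϱ*Δ/(4*(3*3^k₀)))) = (3^j/3^k₀)*(ϱ*Δ/6) := by
          field_simp; ring
        rw [expand]
        have hr1 : (3:ℝ)^j/3^k₀ ≤ 1 := div_le_one_of_le₀ h1 h30.le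
        nlinarith
      have h7 : ϱ*Δ/6 < ϱ*Δ/2 := by linarith
      linarith
    have := layer_step hd hϱ0 hϱ1 hne hj hδj hδjp
    have h3e : (3:ℝ) * (3^j * δ₀) = 3^(j+1) * δ₀ := by ring
    rw [h3e] at this
    have hsub2 : A (3^j * δ₀) ⊆ A (3^(j+1)*δ₀) := by
      intro x hx
      refine ⟨hx.1, le_trans hx.2 ?_⟩
      have : (3:ℝ)^j ≤ 3^(j+1) := by
        apply pow_le_pow_right₀ <;> norm_num
      nlinarith
    have hmeasA : MeasurableSet (A (3^j * δ₀)) :=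
      (ho.measurableSet.inter ((continuous_infDist_pt _).measurable measurableSet_Iic))
    have hadd : volume (A (3^j * δ₀)) + volume (A (3^(j+1)*δ₀) \ A (3^j * δ₀))
        = volume (A (3^(j+1)*δ₀)) := by
      rw [measure_add_diff hmeasA.nullMeasurableSet, union_eq_self_of_subset_left hsub2]
    calc (1 + ENNReal.ofReal c) * volume (A (3^j * δ₀))
        = volume (A (3^j * δ₀)) + ENNReal.ofReal c * volume (A (3^j * δ₀)) := by ring
      _ ≤ ENNReal.ofReal c * volume (A (3^(j+1)*δ₀) \ A (3^j * δ₀))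
          + ENNReal.ofReal c * volume (A (3^j * δ₀)) := by gcongr
      _ = ENNReal.ofReal c * (volume (A (3^j * δ₀)) + volume (A (3^(j+1)*δ₀) \ A (3^j * δ₀))) := by ring
      _ = ENNReal.ofReal c * volume (A (3^(j+1)*δ₀)) := by rw [hadd]
  -- iterate
  have hiter : ∀ j : ℕ, j ≤ k → (1 + ENNReal.ofReal c)^j * volume (A δ₀)
      ≤ (ENNReal.ofReal c)^j * volume (A (3^j * δ₀)) := by
    intro j
    induction j with
    | zero => intro _; simp
    | succ n ih =>
      intro hnk
      have h1 := ih (by omega)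
      have h2 := hstep n (by omega)
      calc (1 + ENNReal.ofReal c)^(n+1) * volume (A δ₀)
          = (1 + ENNReal.ofReal c) * ((1 + ENNReal.ofReal c)^n * volume (A δ₀)) := by ring
        _ ≤ (1 + ENNReal.ofReal c) * ((ENNReal.ofReal c)^n * volume (A (3^n * δ₀))) := by gcongr
        _ = (ENNReal.ofReal c)^n * ((1 + ENNReal.ofReal c) * volume (A (3^n * δ₀))) := by ring
        _ ≤ (ENNReal.ofReal c)^n * (ENNReal.ofReal c * volume (A (3^(n+1) * δ₀))) := by gcongr
        _ = (ENNReal.ofReal c)^(n+1) * volume (A (3^(n+1) * δ₀)) := by ring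
  have hfin := hiter k le_rfl
  -- conclude μ (A δ₀) < μ S
  have hμΩpos : 0 < volume Ω := ho.measure_pos volume hconn.nonempty
  have hμΩfin : volume Ω < ⊤ := hb.measure_lt_top
  have hμSpos : volume S ≠ 0 := by
    intro h0
    rw [h0, mul_zero] at hvol
    exact hμΩpos.ne' (le_antisymm hvol zero_le)
  have hμSfin : volume S ≠ ⊤ := (lt_of_le_of_lt (measure_mono hSΩ) hμΩfin).ne
  have hAsub : A (3^k * δ₀) ⊆ Ω := fun x hx => hx.1
  have hckc : (ENNReal.ofReal c)^k * ENNReal.ofReal c₀ < (1 + ENNReal.ofReal c)^k := by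
    rw [← ENNReal.ofReal_pow hcpos.le, ← ENNReal.ofReal_mul (by positivity),
      ← ENNReal.ofReal_one, ← ENNReal.ofReal_add zero_le_one hcpos.le,
      ← ENNReal.ofReal_pow (by positivity)]
    apply ENNReal.ofReal_lt_ofReal_iff_of_nonneg (by positivity) |>.2
    have h6 : c^k / (1+c)^k < 1/c₀ := by
      rw [← div_pow]; exact hkk
    rw [div_lt_div_iff₀ (by positivity) (by positivity)] at h6
    nlinarith
  have hchain : (1 + ENNReal.ofReal c)^k * volume (A δ₀)
      < (1 + ENNReal.ofReal c)^k * volume S := by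
    calc (1 + ENNReal.ofReal c)^k * volume (A δ₀)
        ≤ (ENNReal.ofReal c)^k * volume (A (3^k * δ₀)) := hfin
      _ ≤ (ENNReal.ofReal c)^k * volume Ω := by gcongr
      _ ≤ (ENNReal.ofReal c)^k * (ENNReal.ofReal c₀ * volume S) := by gcongr
      _ = ((ENNReal.ofReal c)^k * ENNReal.ofReal c₀) * volume S := by ring
      _ < (1 + ENNReal.ofReal c)^k * volume S := by
          exact (ENNReal.mul_lt_mul_iff_left hμSpos hμSfin).2 hckc
  have hAlt : volume (A δ₀) < volume S := by
    have hpow : (1 + ENNReal.ofReal c)^k ≠ 0 :=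
      pow_ne_zero _ (by simp)
    have hpow2 : (1 + ENNReal.ofReal c)^k ≠ ⊤ := by
      apply ENNReal.pow_ne_top
      exact (ENNReal.add_lt_top.2 ⟨ENNReal.one_lt_top, ENNReal.ofReal_lt_top⟩).ne
    exact (ENNReal.mul_lt_mul_iff_right hpow hpow2).1 hchain
  have : ¬ S ⊆ A δ₀ := fun hsub => absurd (measure_mono hsub) (not_le.2 hAlt)
  obtain ⟨z, hzS, hznA⟩ := not_subset.1 this
  refine ⟨z, hzS, fun w hw => ?_⟩
  have hzΩ : z ∈ Ω := hSΩ hzS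
  have hzd : δ₀ < infDist z Ωᶜ := by
    by_contra hcon
    exact hznA ⟨hzΩ, not_lt.1 hcon⟩
  apply ball_infDist_compl_subset
  rw [mem_ball] at hw ⊢
  exact lt_trans hw hzd

end Deep

lemma carrot_arith {ϱ c₁ Δ A u t : ℝ} (hϱ0 : 0 < ϱ) (hc₁ : 0 < c₁) (hΔ : 0 < Δ)
    (hA : 0 ≤ A) (hA' : A ≤ 2*Δ/ϱ) (hu : 0 ≤ u) (ht : t ≤ A + u) :
    min (ϱ/2) (min (ϱ*c₁/((1+ϱ)*(2/ϱ+c₁))) (ϱ^2*c₁/(4*(1+ϱ)))) * t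
      ≤ max (ϱ*u) (c₁*Δ - u) := by
  set ϱ' := min (ϱ/2) (min (ϱ*c₁/((1+ϱ)*(2/ϱ+c₁))) (ϱ^2*c₁/(4*(1+ϱ)))) with hϱ'
  have hden1 : (0:ℝ) < 1 + ϱ := by linarith
  have hden2 : (0:ℝ) < 2/ϱ + c₁ := by positivity
  have hϱ'pos : 0 < ϱ' := by
    apply lt_min (by positivity) (lt_min (by positivity) (by positivity))
  have h1 : ϱ' ≤ ϱ/2 := min_le_left _ _
  have h2 : ϱ' ≤ ϱ*c₁/((1+ϱ)*(2/ϱ+c₁)) := le_trans (min_le_right _ _) (min_le_left _ _)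
  have h3 : ϱ' ≤ ϱ^2*c₁/(4*(1+ϱ)) := le_trans (min_le_right _ _) (min_le_right _ _)
  set δ := c₁ * Δ with hδ
  have hδpos : 0 < δ := by positivity
  set u₀ := δ/(1+ϱ) with hu₀
  have hu₀pos : 0 < u₀ := by positivity
  have hstep : ϱ' * t ≤ ϱ' * (A + u) := by
    apply mul_le_mul_of_nonneg_left ht hϱ'pos.le
  rcases le_or_gt u u₀ with hcase | hcase
  · refine le_trans hstep (le_trans ?_ (le_max_right _ _))
    have e1 : δ - u ≥ ϱ*δ/(1+ϱ) := by
      rw [ge_iff_le, div_le_iff₀ hden1]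
      have : u ≤ δ/(1+ϱ) := hcase
      rw [div_eq_iff hden1.ne'] at hu₀
      nlinarith
    have e2 : A + u ≤ Δ*(2/ϱ + c₁) := by
      have : u₀ ≤ c₁ * Δ := by
        rw [hu₀, div_le_iff₀ hden1]; nlinarith
      have h2Δ : 2*Δ/ϱ = Δ*(2/ϱ) := by ring
      nlinarith [hA']
    have e3 : ϱ' * (A + u) ≤ (ϱ*c₁/((1+ϱ)*(2/ϱ+c₁))) * (Δ*(2/ϱ + c₁)) := by
      apply mul_le_mul h2 e2 (by positivity) (by positivity)
    have e4 : (ϱ*c₁/((1+ϱ)*(2/ϱ+c₁))) * (Δ*(2/ϱ + c₁)) = ϱ*δ/(1+ϱ) := by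
      rw [hδ]; field_simp
    linarith
  · refine le_trans hstep (le_trans ?_ (le_max_left _ _))
    have e1 : ϱ' * A ≤ (ϱ/2) * u₀ := by
      have e2 : (ϱ^2*c₁/(4*(1+ϱ))) * (2*Δ/ϱ) = (ϱ/2) * u₀ := by
        rw [hu₀, hδ]; field_simp; ring
      calc ϱ' * A ≤ (ϱ^2*c₁/(4*(1+ϱ))) * (2*Δ/ϱ) :=
            mul_le_mul h3 hA' hA (by positivity)
        _ = (ϱ/2) * u₀ := e2
    have e3 : ϱ' * u ≤ (ϱ/2) * u := mul_le_mul_of_nonneg_right h1 hu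
    have e4 : (ϱ/2) * u₀ ≤ (ϱ/2) * u := by nlinarith
    nlinarith

section Key
variable {d : ℕ}
local notation "E" => EuclideanSpace ℝ (Fin d)

lemma key (hd : d ≠ 0) {ϱ c₀ : ℝ} (hϱ0 : 0 < ϱ) (hϱ1 : ϱ ≤ 1) (hc0 : 0 < c₀) :
    ∃ ϱ' : ℝ, 0 < ϱ' ∧ ∀ D₁ D₂ : Set E, IsJohnDomain ϱ D₁ → IsJohnDomain ϱ D₂ →
      volume D₁ ≤ ENNReal.ofReal c₀ * volume (D₁ ∩ D₂) → IsJohnDomain ϱ' (D₁ ∪ D₂) := by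
  obtain ⟨c₁, hc₁pos, hc₁le, hdeep⟩ := exists_deep hd hϱ0 hϱ1 hc0
  have hden1 : (0:ℝ) < 1 + ϱ := by linarith
  have hden2 : (0:ℝ) < 2/ϱ + c₁ := by positivity
  set ϱ' := min (ϱ/2) (min (ϱ*c₁/((1+ϱ)*(2/ϱ+c₁))) (ϱ^2*c₁/(4*(1+ϱ)))) with hϱ'
  have hϱ'pos : 0 < ϱ' :=
    lt_min (by positivity) (lt_min (by positivity) (by positivity))
  have hϱ'ϱ : ϱ' ≤ ϱ := le_trans (min_le_left _ _) (by linarith)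
  refine ⟨ϱ', hϱ'pos, ?_⟩
  intro D₁ D₂ hJ1 hJ2 hvol
  obtain ⟨z, hzS, hzball⟩ := hdeep D₁ (D₁ ∩ D₂) hJ1 inter_subset_left hvol
  obtain ⟨ho1, hcn1, hb1, p₁, hp₁, hj1⟩ := hJ1
  obtain ⟨ho2, hcn2, hb2, p₂, hp₂, hj2⟩ := hJ2
  set Δ := diam D₁ with hΔdef
  have hΔpos : 0 < Δ := by
    obtain ⟨w₀, hw₀⟩ := hcn1.nonempty
    obtain ⟨ε, hεpos, hεball⟩ := Metric.isOpen_iff.1 ho1 w₀ hw₀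
    exact lt_of_lt_of_le hεpos (radius_le_diam hd hb1 hεpos.le hεball)
  refine ⟨ho1.union ho2, IsConnected.union ⟨z, hzS⟩ hcn1 hcn2, hb1.union hb2,
    p₂, Or.inr hp₂, ?_⟩
  intro x hx
  by_cases hx2 : x ∈ D₂
  · obtain ⟨L, hL, γ, h0, hLp, hm, hv, hball⟩ := hj2 x ⟨hx2, hx.2⟩
    refine ⟨L, hL, γ, h0, hLp, hm.mono_right subset_union_right, hv, fun t ht => ?_⟩
    exact le_trans (ball_subset_ball (mul_le_mul_of_nonneg_right hϱ'ϱ ht.1))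
      ((hball t ht).trans subset_union_right)
  · have hx1 : x ∈ D₁ := hx.1.resolve_right hx2
    obtain ⟨L₁, hL₁, γ₁, hγ₁0, hγ₁L, hγ₁m, hγ₁v, hγ₁b⟩ := john_curve hp₁ hj1 hx1
    obtain ⟨ℓ, hℓ, γ₂, hγ₂0, hγ₂L, hγ₂m, hγ₂v, hγ₂b⟩ := john_curve hp₁ hj1 hzS.1
    obtain ⟨L₂, hL₂, σ, hσ0, hσL, hσm, hσv, hσb⟩ := john_curve hp₂ hj2 hzS.2
    set β : ℝ → E := fun v => γ₂ (ℓ - v) with hβdef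
    have hβv : ∀ t ∈ Icc (0:ℝ) ℓ, eVariationOn β (Icc 0 t) = ENNReal.ofReal t :=
      var_reverse hℓ hγ₂v
    have hβ0 : β 0 = p₁ := by simp only [hβdef, sub_zero, hγ₂L]
    have hβℓ : β ℓ = z := by simp only [hβdef, sub_self, hγ₂0]
    obtain ⟨Γ₁, hΓ₁a, hΓ₁b, hΓ₁v⟩ := concat hL₁ hℓ (hγ₁L.trans hβ0.symm) hγ₁v hβv
    have hΓ₁0 : Γ₁ 0 = x := by rw [hΓ₁a 0 ⟨le_rfl, hL₁⟩, hγ₁0]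
    have hΓ₁end : Γ₁ (L₁ + ℓ) = z := by rw [hΓ₁b ℓ ⟨hℓ, le_rfl⟩, hβℓ]
    obtain ⟨Γ, hΓa, hΓb, hΓv⟩ := concat (by linarith : (0:ℝ) ≤ L₁ + ℓ) hL₂
      (hΓ₁end.trans hσ0.symm) hΓ₁v hσv
    -- length bounds
    have hLd1 : ϱ * L₁ ≤ Δ :=
      radius_le_diam hd hb1 (by positivity) (hγ₁b L₁ ⟨hL₁, le_rfl⟩)
    have hLd2 : ϱ * ℓ ≤ Δ :=
      radius_le_diam hd hb1 (by positivity) (hγ₂b ℓ ⟨hℓ, le_rfl⟩)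
    have hA' : L₁ + ℓ ≤ 2*Δ/ϱ := by
      rw [le_div_iff₀ hϱ0]; nlinarith
    -- description of Γ
    have hdesc : ∀ t ∈ Icc (0:ℝ) (L₁ + ℓ + L₂),
        (0 ≤ t ∧ t ≤ L₁ ∧ Γ t = γ₁ t) ∨
        (∃ u, 0 ≤ u ∧ u ≤ ℓ ∧ t = L₁ + (ℓ - u) ∧ Γ t = γ₂ u) ∨
        (∃ u, 0 ≤ u ∧ u ≤ L₂ ∧ t = (L₁ + ℓ) + u ∧ Γ t = σ u) := by
      intro t ht
      by_cases h : t ≤ L₁ + ℓ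
      · have hΓΓ₁ : Γ t = Γ₁ t := hΓa t ⟨ht.1, h⟩
        by_cases h' : t ≤ L₁
        · exact Or.inl ⟨ht.1, h', by rw [hΓΓ₁, hΓ₁a t ⟨ht.1, h'⟩]⟩
        · push_neg at h'
          refine Or.inr (Or.inl ⟨ℓ - (t - L₁), by linarith, by linarith, by ring, ?_⟩)
          have he : L₁ + (t - L₁) = t := by ring
          have := hΓ₁b (t - L₁) ⟨by linarith, by linarith⟩
          rw [he] at this
          rw [hΓΓ₁, this, hβdef]
      · push_neg at h
        refine Or.inr (Or.inr ⟨t - (L₁ + ℓ), by linarith, by linarith [ht.2], by ring, ?_⟩)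
        have he : (L₁ + ℓ) + (t - (L₁ + ℓ)) = t := by ring
        have := hΓb (t - (L₁ + ℓ)) ⟨by linarith, by linarith [ht.2]⟩
        rw [he] at this
        rw [this]
    refine ⟨L₁ + ℓ + L₂, by linarith, Γ, ?_, ?_, ?_, ?_, ?_⟩
    · rw [hΓa 0 ⟨le_rfl, by linarith⟩, hΓ₁0]
    · have := hΓb L₂ ⟨hL₂, le_rfl⟩
      rw [this, hσL]
    · -- maps into the union
      intro t ht
      rcases hdesc t ht with ⟨h1, h2, h3⟩ | ⟨u, h1, h2, h3, h4⟩ | ⟨u, h1, h2, h3, h4⟩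
      · rw [h3]; exact Or.inl (hγ₁m ⟨h1, h2⟩)
      · rw [h4]; exact Or.inl (hγ₂m ⟨h1, h2⟩)
      · rw [h4]; exact Or.inr (hσm ⟨h1, h2⟩)
    · exact hΓv
    · -- the carrot condition
      intro t ht
      rcases hdesc t ht with ⟨h1, h2, h3⟩ | ⟨u, h1, h2, h3, h4⟩ | ⟨u, h1, h2, h3, h4⟩
      · rw [h3]
        exact le_trans (ball_subset_ball (mul_le_mul_of_nonneg_right hϱ'ϱ h1))
          ((hγ₁b t ⟨h1, h2⟩).trans subset_union_left)
      · -- middle piece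
        rw [h4]
        have harith := carrot_arith (A := L₁ + ℓ) (u := u) (t := t)
          hϱ0 hc₁pos hΔpos (by linarith) hA' h1 (by rw [h3]; linarith)
        refine le_trans (ball_subset_ball harith) ?_
        rcases max_cases (ϱ*u) (c₁*Δ - u) with ⟨heq, _⟩ | ⟨heq, _⟩ <;> rw [heq]
        · exact (hγ₂b u ⟨h1, h2⟩).trans subset_union_left
        · refine le_trans ?_ (hzball.trans subset_union_left)
          intro w hw
          rw [mem_ball] at hw ⊢
          have hdz : dist (γ₂ u) z ≤ u := by
            have := var_dist hγ₂v le_rfl h1 h2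
            rw [hγ₂0] at this
            rw [dist_comm]
            simpa using this
          calc dist w z ≤ dist w (γ₂ u) + dist (γ₂ u) z := dist_triangle _ _ _
            _ < (c₁*Δ - u) + u := by linarith
            _ = c₁ * Δ := by ring
      · -- last piece
        rw [h4]
        have harith := carrot_arith (A := L₁ + ℓ) (u := u) (t := t)
          hϱ0 hc₁pos hΔpos (by linarith) hA' h1 (by rw [h3])
        refine le_trans (ball_subset_ball harith) ?_
        rcases max_cases (ϱ*u) (c₁*Δ - u) with ⟨heq, _⟩ | ⟨heq, _⟩ <;> rw [heq]
        · exact (hσb u ⟨h1, h2⟩).trans subset_union_right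
        · refine le_trans ?_ (hzball.trans subset_union_left)
          intro w hw
          rw [mem_ball] at hw ⊢
          have hdz : dist (σ u) z ≤ u := by
            have := var_dist hσv le_rfl h1 h2
            rw [hσ0] at this
            rw [dist_comm]
            simpa using this
          calc dist w z ≤ dist w (σ u) + dist (σ u) z := dist_triangle _ _ _
            _ < (c₁*Δ - u) + u := by linarith
            _ = c₁ * Δ := by ring

end Key

end JohnUnionAux

/-- **Lemma (union of two John domains).** For `ϱ, c₀ > 0` there is `ϱ' = ϱ'(ϱ, c₀) > 0`
such that if `D₁, D₂ ⊆ ℝ^d` are `ϱ`-John domains with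
`min {|D₁|, |D₂|} ≤ c₀ |D₁ ∩ D₂|`, then `D₁ ∪ D₂` is a `ϱ'`-John domain. -/
theorem john_domain_union (d : ℕ) (ϱ c₀ : ℝ) (hϱ : 0 < ϱ) (hc : 0 < c₀) :
    ∃ ϱ' : ℝ, 0 < ϱ' ∧
      ∀ D₁ D₂ : Set (EuclideanSpace ℝ (Fin d)),
        IsJohnDomain ϱ D₁ → IsJohnDomain ϱ D₂ →
        min (volume D₁) (volume D₂) ≤ ENNReal.ofReal c₀ * volume (D₁ ∩ D₂) →
        IsJohnDomain ϱ' (D₁ ∪ D₂) := by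
  by_cases hd : d = 0
  · subst hd
    refine ⟨ϱ, hϱ, fun D₁ D₂ h₁ h₂ _ => ?_⟩
    obtain ⟨ho1, hcn1, hb1, p₁, hp₁, -⟩ := h₁
    obtain ⟨ho2, hcn2, hb2, p₂, hp₂, -⟩ := h₂
    haveI : Subsingleton (EuclideanSpace ℝ (Fin 0)) :=
      ⟨fun a b => by ext i; exact Fin.elim0 i⟩
    have hpp : p₂ = p₁ := Subsingleton.elim _ _
    refine ⟨ho1.union ho2, IsConnected.union ⟨p₁, hp₁, hpp ▸ hp₂⟩ hcn1 hcn2,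
      hb1.union hb2, p₁, Or.inl hp₁, fun x hx => ?_⟩
    exact absurd (show x ∈ ({p₁} : Set (EuclideanSpace ℝ (Fin 0))) from
      Subsingleton.elim x p₁) hx.2
  · obtain ⟨ϱ', hϱ'pos, hkey⟩ := JohnUnionAux.key hd
      (lt_min hϱ one_pos) (min_le_right ϱ 1) hc
    refine ⟨ϱ', hϱ'pos, fun D₁ D₂ h₁ h₂ hmin => ?_⟩
    have h₁' := JohnUnionAux.john_mono h₁ (min_le_left ϱ 1)
    have h₂' := JohnUnionAux.john_mono h₂ (min_le_left ϱ 1)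
    rcases le_total (volume D₁) (volume D₂) with hle | hle
    · exact hkey D₁ D₂ h₁' h₂' (by rwa [min_eq_left hle] at hmin)
    · rw [Set.union_comm]
      exact hkey D₂ D₁ h₂' h₁' (by rw [Set.inter_comm]; rwa [min_eq_right hle] at hmin)
end

section
/- Every convex polygon P ⊂ ℝ² contains a ball with radius ¼ min_{R ∈ SO(2)} |P|_{Π,R}. -/
open Set Metric MeasureTheory
open scoped ENNReal NNReal

namespace CPB
noncomputable section

noncomputable def sfn (K : Set Pt) (u : Pt) : ℝ := sSup ((fun x => (inner ℝ u x : ℝ)) '' K)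

def Cset (K : Set Pt) (ρ : ℝ) (u : Pt) : Set Pt := {x : Pt | (inner ℝ u x : ℝ) ≤ sfn K u - ρ}

lemma inner_coords (u x : Pt) : (inner ℝ u x : ℝ) = u 0 * x 0 + u 1 * x 1 := by
  simp [PiLp.inner_apply, RCLike.inner_apply, Fin.sum_univ_two]; ring

lemma coord_sq (u : Pt) (hu : ‖u‖ = 1) : u 0 ^ 2 + u 1 ^ 2 = 1 := by
  have h := real_inner_self_eq_norm_sq u
  rw [hu, inner_coords] at h
  nlinarith [h]

lemma coord_abs_le (x : Pt) (i : Fin 2) : |x i| ≤ ‖x‖ := by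
  have h := abs_real_inner_le_norm (EuclideanSpace.single i (1:ℝ)) x
  rw [EuclideanSpace.inner_single_left, EuclideanSpace.norm_single] at h
  simpa using h

lemma bddAbove_sfn {K : Set Pt} {M : ℝ} (hb : K ⊆ closedBall 0 M) (u : Pt) :
    BddAbove ((fun x => (inner ℝ u x : ℝ)) '' K) := by
  refine ⟨‖u‖ * M, ?_⟩
  rintro r ⟨x, hx, rfl⟩
  have hx' : ‖x‖ ≤ M := by simpa [dist_eq_norm] using hb hx
  calc (inner ℝ u x : ℝ) ≤ ‖u‖ * ‖x‖ := real_inner_le_norm u x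
    _ ≤ ‖u‖ * M := mul_le_mul_of_nonneg_left hx' (norm_nonneg u)
    

lemma le_sfn {K : Set Pt} {M : ℝ} (hb : K ⊆ closedBall 0 M) {x : Pt} (hx : x ∈ K) (u : Pt) :
    (inner ℝ u x : ℝ) ≤ sfn K u := le_csSup (bddAbove_sfn hb u) ⟨x, hx, rfl⟩

lemma sfn_le {K : Set Pt} (hne : K.Nonempty) {u : Pt} {c : ℝ}
    (h : ∀ x ∈ K, (inner ℝ u x : ℝ) ≤ c) : sfn K u ≤ c := by
  apply csSup_le (hne.image _)
  rintro r ⟨x, hx, rfl⟩; exact h x hx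

lemma eq_or_eq_neg_of_det {u k : Pt} (hu : ‖u‖ = 1) (hk : ‖k‖ = 1)
    (h : k 1 * u 0 = k 0 * u 1) : k = u ∨ k = -u := by
  have hu2 := coord_sq u hu
  have hk2 := coord_sq k hk
  set d := k 0 * u 0 + k 1 * u 1 with hd
  have h0 : k 0 = d * u 0 := by
    rw [hd]; linear_combination (-(u 1)) * h + (-(k 0)) * hu2
  have h1 : k 1 = d * u 1 := by
    rw [hd]; linear_combination (u 0) * h + (-(k 1)) * hu2
  have hq : (d * u 0) ^ 2 + (d * u 1) ^ 2 = 1 := by rw [← h0, ← h1]; exact hk2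
  have hdsq : d ^ 2 = 1 := by linear_combination hq - d ^ 2 * hu2
  have : (d - 1) * (d + 1) = 0 := by linear_combination hdsq
  rcases mul_eq_zero.1 this with h' | h'
  · left
    have hd1 : d = 1 := by linarith
    ext i
    fin_cases i
    · simpa [hd1] using h0
    · simpa [hd1] using h1
  · right
    have hd1 : d = -1 := by linarith
    ext i
    fin_cases i
    · show k 0 = (-u) 0
      simp only [PiLp.neg_apply]
      rw [h0, hd1]; ring
    · show k 1 = (-u) 1
      simp only [PiLp.neg_apply]
      rw [h1, hd1]; ring

lemma inner_gt_neg_one {u v : Pt} (hu : ‖u‖ = 1) (hv : ‖v‖ = 1) (hvu : v ≠ -u) :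
    -1 < (inner ℝ u v : ℝ) := by
  by_contra hcon
  push_neg at hcon
  have h1 : (inner ℝ u (-v) : ℝ) ≤ 1 := by
    have := real_inner_le_norm u (-v); rw [hu] at this; simpa [hv] using this
  have h2 : (1:ℝ) ≤ (inner ℝ u (-v) : ℝ) := by rw [inner_neg_right]; linarith
  have h3 : (inner ℝ u (-v) : ℝ) = 1 := le_antisymm h1 h2
  have h4 : u = -v :=
    (inner_eq_one_iff_of_norm_eq_one (𝕜 := ℝ) (y := -v) hu (by simpa using hv)).1 (by exact_mod_cast h3)
  exact hvu (by rw [h4]; simp)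

lemma inner_lt_one {u v : Pt} (hu : ‖u‖ = 1) (hv : ‖v‖ = 1) (hvu : v ≠ u) :
    (inner ℝ u v : ℝ) < 1 := by
  rcases lt_or_eq_of_le (show (inner ℝ u v : ℝ) ≤ 1 by
    have := real_inner_le_norm u v; rw [hu, hv] at this; linarith) with h | h
  · exact h
  · exact absurd ((inner_eq_one_iff_of_norm_eq_one (𝕜 := ℝ) hu hv).1 (by exact_mod_cast h)).symm hvu

section Halfplanes

variable {K : Set Pt} {M ρ : ℝ} (hb : K ⊆ closedBall 0 M) (hne : K.Nonempty) (hρ : 0 < ρ)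
  (Hw : ∀ u : Pt, ‖u‖ = 1 → 4 * ρ ≤ sfn K u + sfn K (-u))

include hb hne hρ Hw

lemma two_halfplanes {u v : Pt} (hu : ‖u‖ = 1) (hv : ‖v‖ = 1) :
    ∃ x, x ∈ Cset K ρ u ∧ x ∈ Cset K ρ v := by
  by_cases hvu : v = -u
  · refine ⟨(sfn K u - ρ) • u, ?_, ?_⟩
    · show (inner ℝ u _ : ℝ) ≤ _
      rw [real_inner_smul_right, real_inner_self_eq_norm_sq, hu]
      simp
    · show (inner ℝ v _ : ℝ) ≤ _
      subst hvu
      rw [inner_neg_left, real_inner_smul_right, real_inner_self_eq_norm_sq, hu]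
      have := Hw u hu
      simp only [one_pow, mul_one]
      linarith
  · have hgm : -1 < (inner ℝ u v : ℝ) := inner_gt_neg_one hu hv hvu
    set g : ℝ := inner ℝ u v with hg
    set a : ℝ := 1 + g with ha
    have hapos : 0 < a := by simp only [ha]; linarith
    set m : ℝ := min (sfn K u - ρ) (sfn K v - ρ) with hm
    set t : ℝ := max 0 (-m / a) with ht
    have htnn : 0 ≤ t := le_max_left _ _
    have key : -(t * a) ≤ m := by
      rcases le_or_gt 0 m with hm0 | hm0
      · have : 0 ≤ t * a := mul_nonneg htnn hapos.le
        linarith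
      · have ht' : t = -m / a := by
          rw [ht, max_eq_right]
          exact div_nonneg (by linarith) hapos.le
        rw [ht', div_mul_cancel₀ _ hapos.ne']
        simp
    have hiu : (inner ℝ u (t • (-(u + v))) : ℝ) = -(t * a) := by
      simp only [real_inner_smul_right, inner_neg_right, inner_add_right,
        real_inner_self_eq_norm_sq, hu]
      rw [ha, hg]; ring
    have hiv : (inner ℝ v (t • (-(u + v))) : ℝ) = -(t * a) := by
      simp only [real_inner_smul_right, inner_neg_right, inner_add_right,
        real_inner_self_eq_norm_sq, hv]
      rw [real_inner_comm u v, ha, hg]; ring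
    exact ⟨t • (-(u + v)),
      by show (inner ℝ u _ : ℝ) ≤ _; rw [hiu]; exact key.trans (min_le_left _ _),
      by show (inner ℝ v _ : ℝ) ≤ _; rw [hiv]; exact key.trans (min_le_right _ _)⟩

lemma antipar_aux {u k : Pt} (hu : ‖u‖ = 1) (hk : ‖k‖ = 1) (hk1 : k ≠ u) (hk2 : k ≠ -u) :
    ∃ x, x ∈ Cset K ρ u ∧ x ∈ Cset K ρ (-u) ∧ x ∈ Cset K ρ k := by
  set t : Pt := (WithLp.equiv 2 (Fin 2 → ℝ)).symm ![-(u 1), u 0] with htdef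
  have ht0 : t 0 = -(u 1) := by rw [htdef]; rfl
  have ht1 : t 1 = u 0 := by rw [htdef]; rfl
  have htu : (inner ℝ u t : ℝ) = 0 := by rw [inner_coords, ht0, ht1]; ring
  have hαne : (inner ℝ k t : ℝ) ≠ 0 := by
    intro h0
    rw [inner_coords, ht0, ht1] at h0
    have : k 1 * u 0 = k 0 * u 1 := by linarith
    rcases eq_or_eq_neg_of_det hu hk this with h | h
    · exact hk1 h
    · exact hk2 h
  refine ⟨(sfn K u - ρ) • u +
    ((sfn K k - ρ - (sfn K u - ρ) * (inner ℝ k u : ℝ)) / (inner ℝ k t : ℝ)) • t, ?_, ?_, ?_⟩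
  · show (inner ℝ u _ : ℝ) ≤ _
    simp only [inner_add_right, real_inner_smul_right, htu, mul_zero, add_zero,
      real_inner_self_eq_norm_sq, hu, one_pow, mul_one]
    exact le_rfl
  · show (inner ℝ (-u) _ : ℝ) ≤ _
    simp only [inner_neg_left, inner_add_right, real_inner_smul_right, htu, mul_zero, add_zero,
      real_inner_self_eq_norm_sq, hu, one_pow, mul_one]
    have := Hw u hu
    linarith
  · show (inner ℝ k _ : ℝ) ≤ _
    simp only [inner_add_right, real_inner_smul_right]
    rw [div_mul_cancel₀ _ hαne]
    have hq : (sfn K u - ρ) * (inner ℝ k u : ℝ) +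
        (sfn K k - ρ - (sfn K u - ρ) * (inner ℝ k u : ℝ)) = sfn K k - ρ := by ring
    linarith

lemma core_case {u₁ u₂ u₃ : Pt} (h1 : ‖u₁‖ = 1) (h2 : ‖u₂‖ = 1) (h3 : ‖u₃‖ = 1)
    {l₁ l₂ l₃ : ℝ} (hl1 : 0 < l₁) (hl2 : 0 < l₂) (hl3 : 0 < l₃) (hsum : l₁ + l₂ + l₃ = 1)
    (hm2 : l₂ ≤ l₁) (hm3 : l₃ ≤ l₁)
    (key : ∀ x : Pt, l₁ * (inner ℝ u₁ x : ℝ) + l₂ * (inner ℝ u₂ x : ℝ) + l₃ * (inner ℝ u₃ x : ℝ) = 0)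
    (h21 : u₂ ≠ u₁) (h21' : u₂ ≠ -u₁) :
    ∃ x, x ∈ Cset K ρ u₁ ∧ x ∈ Cset K ρ u₂ ∧ x ∈ Cset K ρ u₃ := by
  set g : ℝ := inner ℝ u₁ u₂ with hg
  have hglt : g < 1 := inner_lt_one h1 h2 h21
  have hggt : -1 < g := inner_gt_neg_one h1 h2 h21'
  have hden : 0 < 1 - g ^ 2 := by nlinarith
  set s₁ := sfn K u₁; set s₂ := sfn K u₂; set s₃ := sfn K u₃
  -- subadditivity : sfn K (-u₁) ≤ (l₂ * s₂ + l₃ * s₃) / l₁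
  have hsub : sfn K (-u₁) ≤ (l₂ * s₂ + l₃ * s₃) / l₁ := by
    apply sfn_le hne
    intro x hx
    rw [inner_neg_left]
    rw [le_div_iff₀ hl1]
    have hk := key x
    have e2 := le_sfn hb hx u₂
    have e3 := le_sfn hb hx u₃
    nlinarith
  have hw1 := Hw u₁ h1
  have hsum1 : 4 * ρ * l₁ ≤ l₁ * s₁ + l₂ * s₂ + l₃ * s₃ := by
    have : l₁ * (4 * ρ) ≤ l₁ * (s₁ + sfn K (-u₁)) := by
      apply mul_le_mul_of_nonneg_left _ hl1.le
      linarith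
    rw [mul_add] at this
    have h' : l₁ * sfn K (-u₁) ≤ l₂ * s₂ + l₃ * s₃ := by
      have := mul_le_mul_of_nonneg_left hsub hl1.le
      rwa [mul_div_cancel₀ _ hl1.ne'] at this
    linarith
  have hl13 : 1 / 3 ≤ l₁ := by linarith
  set c₁ := s₁ - ρ; set c₂ := s₂ - ρ; set c₃ := s₃ - ρ
  have hpos : 0 < l₁ * c₁ + l₂ * c₂ + l₃ * c₃ := by
    have hexp : l₁ * c₁ + l₂ * c₂ + l₃ * c₃
        = (l₁ * s₁ + l₂ * s₂ + l₃ * s₃) - ρ * (l₁ + l₂ + l₃) := by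
      simp only [c₁, c₂, c₃]; ring
    rw [hsum, mul_one] at hexp
    nlinarith
  set a := (c₁ - g * c₂) / (1 - g ^ 2) with hadef
  set b := (c₂ - g * c₁) / (1 - g ^ 2) with hbdef
  set x := a • u₁ + b • u₂ with hxdef
  have i1 : (inner ℝ u₁ x : ℝ) = c₁ := by
    simp only [hxdef, inner_add_right, real_inner_smul_right, real_inner_self_eq_norm_sq, h1,
      one_pow, mul_one, ← hg, hadef, hbdef]
    field_simp
    ring
  have i2 : (inner ℝ u₂ x : ℝ) = c₂ := by
    simp only [hxdef, inner_add_right, real_inner_smul_right, real_inner_self_eq_norm_sq, h2,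
      one_pow, mul_one, hadef, hbdef]
    rw [real_inner_comm u₁ u₂, ← hg]
    field_simp
    ring
  have i3 : (inner ℝ u₃ x : ℝ) ≤ c₃ := by
    have hk := key x
    rw [i1, i2] at hk
    have hq : l₃ * (inner ℝ u₃ x : ℝ) = -(l₁ * c₁ + l₂ * c₂) := by linarith
    nlinarith [hq, hpos, hl3]
  exact ⟨x, by simpa [Cset] using i1.le, by simpa [Cset] using i2.le, by simpa [Cset] using i3⟩

lemma sep_case {u₁ u₂ u₃ : Pt}
    (h0 : (0:Pt) ∉ convexHull ℝ ({u₁, u₂, u₃} : Set Pt)) :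
    ∃ x, x ∈ Cset K ρ u₁ ∧ x ∈ Cset K ρ u₂ ∧ x ∈ Cset K ρ u₃ := by
  obtain ⟨f, s, hfs, hs0⟩ := geometric_hahn_banach_closed_point
    (convex_convexHull ℝ _) (Set.Finite.isClosed_convexHull (𝕜 := ℝ) (Set.toFinite _)) h0
  rw [map_zero] at hs0
  set v : Pt := (InnerProductSpace.toDual ℝ Pt).symm f with hvdef
  have hv : ∀ y : Pt, (inner ℝ v y : ℝ) = f y := fun y => InnerProductSpace.toDual_symm_apply
  have hmem : ∀ u ∈ ({u₁, u₂, u₃} : Set Pt), f u < s := fun u hu =>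
    hfs u (subset_convexHull ℝ _ hu)
  set c₁ := sfn K u₁ - ρ; set c₂ := sfn K u₂ - ρ; set c₃ := sfn K u₃ - ρ
  set t : ℝ := max 1 (max (c₁ / s) (max (c₂ / s) (c₃ / s))) with htdef
  have htpos : (0:ℝ) < t := lt_of_lt_of_le one_pos (le_max_left _ _)
  have hkey : ∀ u : Pt, f u < s → ∀ c : ℝ, c / s ≤ t → (inner ℝ u (t • v) : ℝ) ≤ c := by
    intro u hu c hc
    have e1 : (inner ℝ u (t • v) : ℝ) = t * f u := by
      rw [real_inner_smul_right, real_inner_comm v u, hv]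
    have e2 : t * f u ≤ t * s := mul_le_mul_of_nonneg_left hu.le htpos.le
    have e3 : t * s ≤ c := by
      have := mul_le_mul_of_nonpos_right hc hs0.le
      rwa [div_mul_cancel₀ _ (ne_of_lt hs0)] at this
    linarith
  refine ⟨t • v, ?_, ?_, ?_⟩
  · exact hkey u₁ (hmem u₁ (by simp)) c₁ ((le_max_left _ _).trans (le_max_right _ _))
  · exact hkey u₂ (hmem u₂ (by simp)) c₂
      (((le_max_left _ _).trans (le_max_right _ _)).trans (le_max_right _ _))
  · exact hkey u₃ (hmem u₃ (by simp)) c₃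
      (((le_max_right _ _).trans (le_max_right _ _)).trans (le_max_right _ _))

omit hb hne hρ Hw in
lemma comb_neg {u v : Pt} (hu : ‖u‖ = 1) (hv : ‖v‖ = 1) {a b : ℝ} (ha : 0 ≤ a) (hb' : 0 ≤ b)
    (hab : a + b = 1) (h : a • u + b • v = 0) : v = -u := by
  rcases eq_or_lt_of_le hb' with hb0 | hb0
  · exfalso
    rw [← hb0, zero_smul, add_zero] at h
    have ha1 : a = 1 := by linarith
    rw [ha1, one_smul] at h
    rw [h] at hu
    simp at hu
  · have h' : b • v = -(a • u) := by
      rw [eq_neg_iff_add_eq_zero, add_comm]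
      exact h
    have hveq : v = (b⁻¹ * (-a)) • u := by
      calc v = b⁻¹ • (b • v) := by rw [smul_smul, inv_mul_cancel₀ hb0.ne', one_smul]
        _ = b⁻¹ • (-(a • u)) := by rw [h']
        _ = (b⁻¹ * (-a)) • u := by rw [smul_neg, smul_smul, mul_neg, neg_smul]
    have hnorm : ‖v‖ = |b⁻¹ * (-a)| * ‖u‖ := by rw [hveq, norm_smul, Real.norm_eq_abs]
    rw [hu, hv, mul_one] at hnorm
    have habs : |b⁻¹ * (-a)| = a / b := by
      rw [abs_mul, abs_neg, abs_inv, abs_of_pos hb0, abs_of_nonneg ha]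
      rw [inv_mul_eq_div]
    rw [habs] at hnorm
    have hba : a = b := by
      field_simp at hnorm
      linarith
    have hb2 : b = 1/2 := by linarith
    rw [hveq, hba, hb2]
    norm_num

lemma three_halfplanes {u₁ u₂ u₃ : Pt} (h1 : ‖u₁‖ = 1) (h2 : ‖u₂‖ = 1) (h3 : ‖u₃‖ = 1) :
    ∃ x, x ∈ Cset K ρ u₁ ∧ x ∈ Cset K ρ u₂ ∧ x ∈ Cset K ρ u₃ := by
  classical
  by_cases e12 : u₁ = u₂
  · obtain ⟨x, hx2, hx3⟩ := two_halfplanes hb hne hρ Hw h2 h3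
    exact ⟨x, by rw [show u₁ = u₂ from e12]; exact hx2, hx2, hx3⟩
  by_cases e13 : u₁ = u₃
  · obtain ⟨x, hx2, hx3⟩ := two_halfplanes hb hne hρ Hw h2 h3
    exact ⟨x, by rw [show u₁ = u₃ from e13]; exact hx3, hx2, hx3⟩
  by_cases e23 : u₂ = u₃
  · obtain ⟨x, hx1, hx2⟩ := two_halfplanes hb hne hρ Hw h1 h2
    exact ⟨x, hx1, hx2, by rw [show u₃ = u₂ from e23.symm]; exact hx2⟩
  by_cases a12 : u₂ = -u₁
  · obtain ⟨x, hxu, hxnu, hxk⟩ := antipar_aux hb hne hρ Hw h1 h3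
      (fun h => e13 h.symm) (fun h => e23 (a12.trans h.symm))
    exact ⟨x, hxu, by rw [a12]; exact hxnu, hxk⟩
  by_cases a13 : u₃ = -u₁
  · obtain ⟨x, hxu, hxnu, hxk⟩ := antipar_aux hb hne hρ Hw h1 h2
      (fun h => e12 h.symm) a12
    exact ⟨x, hxu, hxk, by rw [a13]; exact hxnu⟩
  by_cases a23 : u₃ = -u₂
  · obtain ⟨x, hxu, hxnu, hxk⟩ := antipar_aux hb hne hρ Hw h2 h1
      e12 (fun h => a12 (by rw [h]; simp))
    exact ⟨x, hxk, hxu, by rw [a23]; exact hxnu⟩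
  by_cases h0 : (0:Pt) ∈ convexHull ℝ ({u₁, u₂, u₃} : Set Pt)
  · have hcoe : (↑({u₁, u₂, u₃} : Finset Pt) : Set Pt) = ({u₁, u₂, u₃} : Set Pt) := by simp
    rw [← hcoe] at h0
    obtain ⟨w, hw0, hw1, hwc⟩ := Finset.mem_convexHull.1 h0
    set l₁ := w u₁ with hl₁def
    set l₂ := w u₂ with hl₂def
    set l₃ := w u₃ with hl₃def
    have hne12 : u₁ ∉ ({u₂, u₃} : Finset Pt) := by simp [e12, e13]
    have hne23 : u₂ ∉ ({u₃} : Finset Pt) := by simp [e23]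
    have hsum : l₁ + l₂ + l₃ = 1 := by
      rw [show ({u₁, u₂, u₃} : Finset Pt) = insert u₁ (insert u₂ {u₃}) from rfl,
        Finset.sum_insert hne12, Finset.sum_insert hne23, Finset.sum_singleton] at hw1
      linarith
    have hcomb : l₁ • u₁ + l₂ • u₂ + l₃ • u₃ = 0 := by
      rw [Finset.centerMass_eq_of_sum_1 _ id hw1] at hwc
      rw [show ({u₁, u₂, u₃} : Finset Pt) = insert u₁ (insert u₂ {u₃}) from rfl,
        Finset.sum_insert hne12, Finset.sum_insert hne23, Finset.sum_singleton] at hwc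
      rw [← hwc]
      simp [add_assoc, hl₁def, hl₂def, hl₃def]
    have key : ∀ x : Pt,
        l₁ * (inner ℝ u₁ x : ℝ) + l₂ * (inner ℝ u₂ x : ℝ) + l₃ * (inner ℝ u₃ x : ℝ) = 0 := by
      intro x
      have h' := congrArg (fun z : Pt => (inner ℝ z x : ℝ)) hcomb
      simp only [inner_add_left, real_inner_smul_left, inner_zero_left] at h'
      linear_combination h'
    have hw0' : 0 ≤ l₁ ∧ 0 ≤ l₂ ∧ 0 ≤ l₃ :=
      ⟨hw0 u₁ (by simp), hw0 u₂ (by simp), hw0 u₃ (by simp)⟩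
    have hl1 : 0 < l₁ := by
      rcases eq_or_lt_of_le hw0'.1 with h' | h'
      · exfalso
        rw [← h', zero_smul, zero_add] at hcomb
        exact a23 (comb_neg h2 h3 hw0'.2.1 hw0'.2.2 (by linarith) hcomb)
      · exact h'
    have hl2 : 0 < l₂ := by
      rcases eq_or_lt_of_le hw0'.2.1 with h' | h'
      · exfalso
        rw [← h', zero_smul, add_zero] at hcomb
        exact a13 (comb_neg h1 h3 hw0'.1 hw0'.2.2 (by linarith) hcomb)
      · exact h'
    have hl3 : 0 < l₃ := by
      rcases eq_or_lt_of_le hw0'.2.2 with h' | h'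
      · exfalso
        rw [← h', zero_smul, add_zero] at hcomb
        exact a12 (comb_neg h1 h2 hw0'.1 hw0'.2.1 (by linarith) hcomb)
      · exact h'
    rcases le_total l₂ l₁ with m21 | m21
    · rcases le_total l₃ l₁ with m31 | m31
      · exact core_case hb hne hρ Hw h1 h2 h3 hl1 hl2 hl3 hsum m21 m31 key
          (fun h => e12 h.symm) a12
      · obtain ⟨x, x3, x1, x2⟩ := core_case hb hne hρ Hw h3 h1 h2 hl3 hl1 hl2
          (by linarith) m31 (by linarith)
          (fun x => by linarith [key x]) e13 (fun h => a13 (by rw [h]; simp))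
        exact ⟨x, x1, x2, x3⟩
    · rcases le_total l₃ l₂ with m32 | m32
      · obtain ⟨x, x2, x1, x3⟩ := core_case hb hne hρ Hw h2 h1 h3 hl2 hl1 hl3
          (by linarith) m21 m32
          (fun x => by linarith [key x]) e12 (fun h => a12 (by rw [h]; simp))
        exact ⟨x, x1, x2, x3⟩
      · obtain ⟨x, x3, x2, x1⟩ := core_case hb hne hρ Hw h3 h2 h1 hl3 hl2 hl1
          (by linarith) m32 (by linarith)
          (fun x => by linarith [key x]) e23 (fun h => a23 (by rw [h]; simp))
        exact ⟨x, x1, x2, x3⟩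
  · exact sep_case hb hne hρ Hw h0

end Halfplanes

lemma finset_three {α : Type*} [DecidableEq α] (I : Finset α) (hI : I.card ≤ 3) (d : α) :
    ∃ a b c : α, a ∈ insert d I ∧ b ∈ insert d I ∧ c ∈ insert d I ∧
      (↑I : Set α) ⊆ {a, b, c} := by
  interval_cases h : I.card
  · refine ⟨d, d, d, by simp, by simp, by simp, ?_⟩
    rw [Finset.card_eq_zero.1 h]; simp
  · obtain ⟨a, ha⟩ := Finset.card_eq_one.1 h
    exact ⟨a, a, a, by simp [ha], by simp [ha], by simp [ha], by rw [ha]; simp⟩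
  · obtain ⟨a, b, hab, hI'⟩ := Finset.card_eq_two.1 h
    exact ⟨a, b, b, by simp [hI'], by simp [hI'], by simp [hI'], by rw [hI']; simp [Set.insert_subset_iff]⟩
  · obtain ⟨a, b, c, hab, hac, hbc, hI'⟩ := Finset.card_eq_three.1 h
    refine ⟨a, b, c, by simp [hI'], by simp [hI'], by simp [hI'], by rw [hI']; simp [Set.insert_subset_iff]⟩

lemma Cset_convex (K : Set Pt) (ρ : ℝ) (u : Pt) : Convex ℝ (Cset K ρ u) :=
  convex_halfSpace_le ⟨fun x y => inner_add_right u x y, fun c x => real_inner_smul_right u x c⟩ _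

lemma Cset_closed (K : Set Pt) (ρ : ℝ) (u : Pt) : IsClosed (Cset K ρ u) :=
  isClosed_le (Continuous.inner continuous_const continuous_id) continuous_const

lemma ball_in_convex (K : Set Pt) (hconv : Convex ℝ K) (hcl : IsClosed K) (hne : K.Nonempty)
    (M : ℝ) (hb : K ⊆ closedBall 0 M) (ρ : ℝ) (hρ : 0 < ρ)
    (Hw : ∀ u : Pt, ‖u‖ = 1 → 4 * ρ ≤ sfn K u + sfn K (-u)) :
    ∃ x : Pt, ball x ρ ⊆ K := by
  classical
  set E1 : Pt := EuclideanSpace.single (0 : Fin 2) (1:ℝ) with hE1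
  set E2 : Pt := EuclideanSpace.single (1 : Fin 2) (1:ℝ) with hE2
  have hE1n : ‖E1‖ = 1 := by rw [hE1, EuclideanSpace.norm_single]; norm_num
  have hE2n : ‖E2‖ = 1 := by rw [hE2, EuclideanSpace.norm_single]; norm_num
  set S : Set Pt := Cset K ρ E1 ∩ Cset K ρ (-E1) ∩ (Cset K ρ E2 ∩ Cset K ρ (-E2)) with hS
  -- S is bounded
  set B : ℝ := |sfn K E1| + |sfn K (-E1)| + |sfn K E2| + |sfn K (-E2)| + 4 * ρ + 1 with hB
  have hBpos : 0 < B := by positivity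
  have hSsub : S ⊆ closedBall 0 (2 * B) := by
    intro x hx
    obtain ⟨⟨hx1, hx2⟩, hx3, hx4⟩ := hx
    have e1 : (inner ℝ E1 x : ℝ) = x 0 := by
      rw [hE1, EuclideanSpace.inner_single_left]; simp
    have e2 : (inner ℝ E2 x : ℝ) = x 1 := by
      rw [hE2, EuclideanSpace.inner_single_left]; simp
    have hx1' : x 0 ≤ sfn K E1 - ρ := by rw [← e1]; exact hx1
    have hx2' : -(x 0) ≤ sfn K (-E1) - ρ := by
      have := hx3  -- dummy
      have h' : (inner ℝ (-E1) x : ℝ) ≤ sfn K (-E1) - ρ := hx2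
      rwa [inner_neg_left, e1] at h'
    have hx3' : x 1 ≤ sfn K E2 - ρ := by rw [← e2]; exact hx3
    have hx4' : -(x 1) ≤ sfn K (-E2) - ρ := by
      have h' : (inner ℝ (-E2) x : ℝ) ≤ sfn K (-E2) - ρ := hx4
      rwa [inner_neg_left, e2] at h'
    have hb0 : |x 0| ≤ B := by
      rw [abs_le]
      constructor <;> [skip; skip] <;>
        · simp only [hB]
          cases' abs_cases (sfn K E1) with h h <;> cases' abs_cases (sfn K (-E1)) with h' h' <;>
            cases' abs_cases (sfn K E2) with h'' h'' <;>
            cases' abs_cases (sfn K (-E2)) with h''' h''' <;> linarith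
    have hb1 : |x 1| ≤ B := by
      rw [abs_le]
      constructor <;> [skip; skip] <;>
        · simp only [hB]
          cases' abs_cases (sfn K E1) with h h <;> cases' abs_cases (sfn K (-E1)) with h' h' <;>
            cases' abs_cases (sfn K E2) with h'' h'' <;>
            cases' abs_cases (sfn K (-E2)) with h''' h''' <;> linarith
    rw [mem_closedBall, dist_eq_norm, sub_zero, EuclideanSpace.norm_eq]
    rw [show Real.sqrt (∑ i : Fin 2, ‖x i‖ ^ 2) = Real.sqrt (|x 0|^2 + |x 1|^2) by
      congr 1; rw [Fin.sum_univ_two]; simp [Real.norm_eq_abs]]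
    calc Real.sqrt (|x 0|^2 + |x 1|^2) ≤ Real.sqrt ((2*B)^2) := by
          apply Real.sqrt_le_sqrt; nlinarith [abs_nonneg (x 0), abs_nonneg (x 1)]
      _ = 2 * B := Real.sqrt_sq (by linarith)
  have hSclosed : IsClosed S :=
    (((Cset_closed K ρ E1).inter (Cset_closed K ρ (-E1))).inter
      ((Cset_closed K ρ E2).inter (Cset_closed K ρ (-E2))))
  have hScompact : IsCompact S :=
    (isCompact_closedBall (0:Pt) (2*B)).of_isClosed_subset hSclosed hSsub
  -- the family
  set F : {u : Pt // ‖u‖ = 1} → Set Pt := fun i => Cset K ρ i.1 ∩ S with hF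
  have hmain : (⋂ i, F i).Nonempty := by
    apply Convex.helly_theorem_compact' (𝕜 := ℝ)
    · exact fun i => (Cset_convex K ρ i.1).inter
        ((((Cset_convex K ρ E1).inter (Cset_convex K ρ (-E1)))).inter
          ((Cset_convex K ρ E2).inter (Cset_convex K ρ (-E2))))
    · exact fun i => hScompact.of_isClosed_subset ((Cset_closed K ρ i.1).inter hSclosed)
        inter_subset_right
    · intro I hIcard
      rw [finrank_euclideanSpace_fin] at hIcard
      set s : Finset Pt := I.image Subtype.val ∪ {E1, -E1, E2, -E2} with hs
      have hs_unit : ∀ u ∈ s, ‖u‖ = 1 := by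
        intro u hu
        rw [hs, Finset.mem_union] at hu
        rcases hu with hu | hu
        · obtain ⟨i, _, rfl⟩ := Finset.mem_image.1 hu
          exact i.2
        · simp only [Finset.mem_insert, Finset.mem_singleton] at hu
          rcases hu with rfl | rfl | rfl | rfl <;> simp [hE1n, hE2n]
      have hsub : (⋂ u ∈ s, Cset K ρ u) ⊆ ⋂ i ∈ I, F i := by
        intro x hx
        simp only [mem_iInter] at hx ⊢
        intro i hi
        have hxs : ∀ u ∈ s, x ∈ Cset K ρ u := hx
        have hmem1 : (i.1 : Pt) ∈ s := by
          rw [hs]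
          exact Finset.mem_union_left _ (Finset.mem_image_of_mem _ hi)
        have hm : ∀ u ∈ ({E1, -E1, E2, -E2} : Finset Pt), x ∈ Cset K ρ u := by
          intro u hu
          exact hxs u (by rw [hs]; exact Finset.mem_union_right _ hu)
        exact ⟨hxs _ hmem1, ⟨hm E1 (by simp), hm (-E1) (by simp)⟩,
          hm E2 (by simp), hm (-E2) (by simp)⟩
      apply Set.Nonempty.mono hsub
      apply Convex.helly_theorem' (𝕜 := ℝ) (fun i _ => Cset_convex K ρ i)
      intro I' hI's hI'card
      rw [finrank_euclideanSpace_fin] at hI'card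
      obtain ⟨a, b, c, hmema, hmemb, hmemc, hcover⟩ := finset_three I' hI'card E1
      have hua : ‖a‖ = 1 := by
        rcases Finset.mem_insert.1 hmema with h | h
        · rw [h]; exact hE1n
        · exact hs_unit a (hI's h)
      have hub : ‖b‖ = 1 := by
        rcases Finset.mem_insert.1 hmemb with h | h
        · rw [h]; exact hE1n
        · exact hs_unit b (hI's h)
      have huc : ‖c‖ = 1 := by
        rcases Finset.mem_insert.1 hmemc with h | h
        · rw [h]; exact hE1n
        · exact hs_unit c (hI's h)
      obtain ⟨x, hxa, hxb, hxc⟩ := three_halfplanes hb hne hρ Hw hua hub huc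
      refine ⟨x, ?_⟩
      simp only [mem_iInter]
      intro u hu
      rcases hcover hu with h | h | h
      · rw [h]; exact hxa
      · rw [h]; exact hxb
      · rw [h]; exact hxc
  obtain ⟨x₀, hx₀⟩ := hmain
  refine ⟨x₀, ?_⟩
  intro y hy
  by_contra hyK
  obtain ⟨f, s, hfs, hs0⟩ := geometric_hahn_banach_closed_point hconv hcl hyK
  set v : Pt := (InnerProductSpace.toDual ℝ Pt).symm f with hvdef
  have hv : ∀ z : Pt, (inner ℝ v z : ℝ) = f z := fun z => InnerProductSpace.toDual_symm_apply
  have hvne : v ≠ 0 := by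
    intro h0
    obtain ⟨p, hp⟩ := hne
    have h1 := hfs p hp
    have h2 : f p = 0 := by rw [← hv p, h0]; simp
    have h3 : f y = 0 := by rw [← hv y, h0]; simp
    rw [h2] at h1; rw [h3] at hs0; linarith
  set u₀ : Pt := ‖v‖⁻¹ • v with hu₀
  have hvn : 0 < ‖v‖ := norm_pos_iff.2 hvne
  have hu₀n : ‖u₀‖ = 1 := by
    rw [hu₀, norm_smul, norm_inv, norm_norm, inv_mul_cancel₀ hvn.ne']
  have hsfn : sfn K u₀ ≤ ‖v‖⁻¹ * s := by
    apply sfn_le hne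
    intro z hz
    rw [hu₀, real_inner_smul_left, hv]
    exact mul_le_mul_of_nonneg_left (hfs z hz).le (by positivity)
  have hx₀u : x₀ ∈ Cset K ρ u₀ := by
    have := mem_iInter.1 hx₀ ⟨u₀, hu₀n⟩
    exact this.1
  have hyx : (inner ℝ u₀ (y - x₀) : ℝ) < ρ := by
    calc (inner ℝ u₀ (y - x₀) : ℝ) ≤ ‖u₀‖ * ‖y - x₀‖ := real_inner_le_norm _ _
      _ = ‖y - x₀‖ := by rw [hu₀n, one_mul]
      _ = dist y x₀ := (dist_eq_norm _ _).symm
      _ < ρ := hy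
  have hyu : (inner ℝ u₀ y : ℝ) = inner ℝ u₀ x₀ + inner ℝ u₀ (y - x₀) := by
    rw [← inner_add_right]; congr 1; abel
  have h1 : (inner ℝ u₀ y : ℝ) < sfn K u₀ := by
    have h2 : (inner ℝ u₀ x₀ : ℝ) ≤ sfn K u₀ - ρ := hx₀u
    rw [hyu]; linarith
  have h3 : ‖v‖⁻¹ * s < (inner ℝ u₀ y : ℝ) := by
    rw [hu₀, real_inner_smul_left, hv]
    exact mul_lt_mul_of_pos_left hs0 (by positivity)
  linarith

lemma zero_mem_wset {K : Set Pt} (hne : K.Nonempty) (θ : ℝ) :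
    (0:ℝ) ∈ {r : ℝ | ∃ x ∈ K, ∃ y ∈ K,
      |(x 0 - y 0) * Real.cos θ + (x 1 - y 1) * Real.sin θ| = r} := by
  obtain ⟨p, hp⟩ := hne
  exact ⟨p, hp, p, hp, by simp⟩

lemma bddAbove_wset {K : Set Pt} {M : ℝ} (hb : K ⊆ closedBall 0 M) (θ : ℝ) :
    BddAbove {r : ℝ | ∃ x ∈ K, ∃ y ∈ K,
      |(x 0 - y 0) * Real.cos θ + (x 1 - y 1) * Real.sin θ| = r} := by
  refine ⟨4 * |M|, ?_⟩
  rintro r ⟨x, hx, y, hy, rfl⟩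
  have hxM : ‖x‖ ≤ M := by simpa [dist_eq_norm] using hb hx
  have hyM : ‖y‖ ≤ M := by simpa [dist_eq_norm] using hb hy
  have hx0 : |x 0| ≤ |M| := (coord_abs_le x 0).trans (hxM.trans (le_abs_self M))
  have hx1 : |x 1| ≤ |M| := (coord_abs_le x 1).trans (hxM.trans (le_abs_self M))
  have hy0 : |y 0| ≤ |M| := (coord_abs_le y 0).trans (hyM.trans (le_abs_self M))
  have hy1 : |y 1| ≤ |M| := (coord_abs_le y 1).trans (hyM.trans (le_abs_self M))
  have hc : |Real.cos θ| ≤ 1 := Real.abs_cos_le_one θ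
  have hs : |Real.sin θ| ≤ 1 := Real.abs_sin_le_one θ
  have h0 : |x 0 - y 0| ≤ 2 * |M| := by
    calc |x 0 - y 0| ≤ |x 0| + |y 0| := abs_sub _ _
      _ ≤ 2 * |M| := by linarith
  have h1 : |x 1 - y 1| ≤ 2 * |M| := by
    calc |x 1 - y 1| ≤ |x 1| + |y 1| := abs_sub _ _
      _ ≤ 2 * |M| := by linarith
  calc |(x 0 - y 0) * Real.cos θ + (x 1 - y 1) * Real.sin θ|
      ≤ |(x 0 - y 0) * Real.cos θ| + |(x 1 - y 1) * Real.sin θ| := abs_add_le _ _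
    _ = |x 0 - y 0| * |Real.cos θ| + |x 1 - y 1| * |Real.sin θ| := by rw [abs_mul, abs_mul]
    _ ≤ (2 * |M|) * 1 + (2 * |M|) * 1 := by
        apply add_le_add <;> apply mul_le_mul <;>
          first | assumption | exact abs_nonneg _ | positivity
    _ ≤ 4 * |M| := by nlinarith [abs_nonneg M]

lemma width_bridge (K : Set Pt) (hne : K.Nonempty) {M : ℝ} (hb : K ⊆ closedBall 0 M)
    {u : Pt} (hu : ‖u‖ = 1) : minWidth K ≤ sfn K u + sfn K (-u) := by
  set z : ℂ := ⟨u 0, u 1⟩ with hz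
  have hsq := coord_sq u hu
  have habs : ‖z‖ = 1 := by
    rw [Complex.norm_def, Complex.normSq_mk]
    rw [show u 0 * u 0 + u 1 * u 1 = 1 by nlinarith]
    exact Real.sqrt_one
  have hzne : z ≠ 0 := by
    intro h; rw [h] at habs; simp at habs
  have hcos : Real.cos z.arg = u 0 := by
    rw [Complex.cos_arg hzne, habs, div_one]
  have hsin : Real.sin z.arg = u 1 := by
    rw [Complex.sin_arg, habs, div_one]
  have step1 : minWidth K ≤ dirWidth K z.arg := by
    apply ciInf_le
    refine ⟨0, ?_⟩
    rintro b ⟨θ, rfl⟩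
    exact le_csSup (bddAbove_wset hb θ) (zero_mem_wset hne θ)
  refine step1.trans ?_
  apply csSup_le ⟨0, zero_mem_wset hne z.arg⟩
  rintro r ⟨x, hx, y, hy, rfl⟩
  rw [hcos, hsin]
  have e : (x 0 - y 0) * u 0 + (x 1 - y 1) * u 1 = (inner ℝ u x : ℝ) - (inner ℝ u y : ℝ) := by
    rw [inner_coords, inner_coords]; ring
  rw [e]
  have hux := le_sfn hb hx u
  have huy := le_sfn hb hy u
  have hux' := le_sfn hb hx (-u)
  have huy' := le_sfn hb hy (-u)
  rw [inner_neg_left] at hux' huy'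
  rw [abs_le]
  constructor <;> linarith

open Bornology in
lemma bounded_carrier (D : Set Pt) {R : ℝ} (hR0 : 0 ≤ R) (hR : D ⊆ closedBall 0 R) :
    {x : Pt | IsBounded (connectedComponentIn Dᶜ x)} ⊆ closedBall 0 R := by
  intro x hx
  by_contra hxR
  have hnx : R < ‖x‖ := by
    rw [mem_closedBall, dist_eq_norm, sub_zero] at hxR
    linarith [not_le.1 hxR]
  have hxpos : 0 < ‖x‖ := lt_of_le_of_lt hR0 hnx
  set ray : Set Pt := (fun t : ℝ => t • x) '' Ici 1 with hray
  have hconn : IsPreconnected ray :=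
    isPreconnected_Ici.image _ (Continuous.continuousOn (by continuity))
  have hxray : x ∈ ray := ⟨1, mem_Ici.2 (le_refl 1), one_smul ℝ x⟩
  have hsub : ray ⊆ Dᶜ := by
    rintro _ ⟨t, ht, rfl⟩
    intro hD'
    have h1 := hR hD'
    rw [mem_closedBall, dist_eq_norm, sub_zero, norm_smul, Real.norm_eq_abs,
      abs_of_nonneg (by linarith [mem_Ici.1 ht] : (0:ℝ) ≤ t)] at h1
    have h2 : ‖x‖ ≤ t * ‖x‖ := le_mul_of_one_le_left (norm_nonneg x) (mem_Ici.1 ht)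
    linarith
  have hraysub : ray ⊆ connectedComponentIn Dᶜ x :=
    hconn.subset_connectedComponentIn hxray hsub
  have hxb : IsBounded (connectedComponentIn Dᶜ x) := hx
  have hraybdd : IsBounded ray := hxb.subset hraysub
  obtain ⟨r, hr⟩ := hraybdd.subset_closedBall 0
  set t : ℝ := max 1 ((|r| + 1) / ‖x‖) with ht
  have ht1 : 1 ≤ t := le_max_left _ _
  have htmem : t • x ∈ ray := ⟨t, mem_Ici.2 ht1, rfl⟩
  have := hr htmem
  rw [mem_closedBall, dist_eq_norm, sub_zero, norm_smul, Real.norm_eq_abs,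
    abs_of_nonneg (by linarith : (0:ℝ) ≤ t)] at this
  have h3 : (|r| + 1) / ‖x‖ ≤ t := le_max_right _ _
  have h4 : |r| + 1 ≤ t * ‖x‖ := by
    rw [div_le_iff₀ hxpos] at h3
    linarith
  have h5 : r ≤ |r| := le_abs_self r
  linarith

open Bornology in
lemma closed_carrier (D : Set Pt) (hD : IsClosed D) :
    IsClosed {x : Pt | IsBounded (connectedComponentIn Dᶜ x)} := by
  rw [← isOpen_compl_iff]
  rw [isOpen_iff_forall_mem_open]
  intro x hx
  simp only [mem_compl_iff, mem_setOf_eq] at hx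
  have hxD : x ∈ Dᶜ := by
    by_contra h
    exact hx (by rw [connectedComponentIn_eq_empty (by simpa using h)]; exact isBounded_empty)
  refine ⟨connectedComponentIn Dᶜ x, ?_, hD.isOpen_compl.connectedComponentIn,
    mem_connectedComponentIn hxD⟩
  intro y hy
  simp only [mem_compl_iff, mem_setOf_eq]
  rw [← connectedComponentIn_eq hy]
  exact hx

open Bornology in
lemma self_sub_carrier (D : Set Pt) :
    D ⊆ {x : Pt | IsBounded (connectedComponentIn Dᶜ x)} := by
  intro x hx
  simp only [mem_setOf_eq]
  rw [connectedComponentIn_eq_empty (by simpa using hx)]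
  exact isBounded_empty


end
end CPB

/-- **Lemma (balls in convex polygons).** Every convex polygon `P ⊆ ℝ²` contains a ball of
radius `¼ min_{R ∈ SO(2)} |P|_{Π,R}`. -/

theorem convex_polygon_contains_ball (P : PlanePolygon) (hP : Convex ℝ P.carrier) :
    ∃ x : Pt, ball x ((1/4) * minWidth P.carrier) ⊆ P.carrier := by
  by_cases hw : minWidth P.carrier ≤ 0
  · exact ⟨0, by rw [Metric.ball_eq_empty.2 (by linarith)]; exact Set.empty_subset _⟩
  · push_neg at hw
    haveI : NeZero P.n := ⟨by have := P.three_le; omega⟩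
    have hBc : IsCompact P.boundary := by
      apply isCompact_iUnion
      intro i
      rw [segment_eq_image ℝ]
      exact isCompact_Icc.image (by continuity)
    obtain ⟨R₀, hR₀⟩ := hBc.isBounded.subset_closedBall 0
    have hR : P.boundary ⊆ closedBall 0 (max R₀ 0) :=
      hR₀.trans (closedBall_subset_closedBall (le_max_left _ _))
    have hcar : P.carrier
        = {x : Pt | Bornology.IsBounded (connectedComponentIn P.boundaryᶜ x)} := rfl
    have hKsub : P.carrier ⊆ closedBall 0 (max R₀ 0) := by
      rw [hcar]; exact CPB.bounded_carrier P.boundary (le_max_right _ _) hR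
    have hKclosed : IsClosed P.carrier := by
      rw [hcar]; exact CPB.closed_carrier P.boundary hBc.isClosed
    have hKne : P.carrier.Nonempty := by
      refine ⟨P.vertex 0, ?_⟩
      rw [hcar]
      apply CPB.self_sub_carrier
      exact Set.mem_iUnion.2 ⟨0, left_mem_segment ℝ _ _⟩
    have hρ : 0 < (1/4) * minWidth P.carrier := by linarith
    have Hw : ∀ u : Pt, ‖u‖ = 1 →
        4 * ((1/4) * minWidth P.carrier) ≤ CPB.sfn P.carrier u + CPB.sfn P.carrier (-u) := by
      intro u hu
      have := CPB.width_bridge P.carrier hKne hKsub hu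
      linarith
    obtain ⟨x, hx⟩ := CPB.ball_in_convex P.carrier hP hKclosed hKne _ hKsub _ hρ Hw
    exact ⟨x, hx⟩
end
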